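/- arXiv:1512.01022 — 4 statements merged into one kernel-verified Lean document; each statement's English description precedes it below -/
import Mathlib

section
/- Let (Δ_i)_{i≥1} be pairwise uncorrelated square-integrable random variables with E[Δ_i] = E[Y_i] − E[Y_{i−1}] (where E[Y_0] = 0 and E[Y_i] → E[Y]), and let (p_i)_{i≥1} be a probability distribution with p_i > 0 for all i and ∑_{i≥1} E[Δ_i²]/p_i < ∞. If R is a random index independent of (Δ_i) with P(R = i) = p_i, then the single-term estimator Z = Δ_R / p_R satisfies E[Z] = E[Y] and E[Z²] = ∑_{i≥1} E[Δ_i²]/p_i. -/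
open MeasureTheory ProbabilityTheory Filter

/-- Single term estimator (Rhee–Glynn): `Z = Δ_R / p_R` is unbiased for `E Y` and its
second moment is `∑ E[Δ_i²]/p_i`. Indexing: Lean index `i : ℕ` corresponds to the
paper's level `i+1`, so `Δ i` has mean `E[Y (i+1)] - E[Y i]` and `E[Y 0] = 0`. -/
theorem single_term_estimator
    {Ω : Type*} [MeasurableSpace Ω] (μ : Measure Ω) [IsProbabilityMeasure μ]
    (Y : Ω → ℝ) (Yseq : ℕ → Ω → ℝ) (Δ : ℕ → Ω → ℝ) (p : ℕ → ℝ) (R : Ω → ℕ)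
    (hYint : Integrable Y μ) (hYiint : ∀ i, Integrable (Yseq i) μ)
    (hY0 : ∫ ω, Yseq 0 ω ∂μ = 0)
    (hYlim : Tendsto (fun i => ∫ ω, Yseq i ω ∂μ) atTop (nhds (∫ ω, Y ω ∂μ)))
    (hΔmeas : ∀ i, Measurable (Δ i))
    (hΔsq : ∀ i, MemLp (Δ i) 2 μ)
    (hΔmean : ∀ i, ∫ ω, Δ i ω ∂μ = (∫ ω, Yseq (i + 1) ω ∂μ) - ∫ ω, Yseq i ω ∂μ)
    (huncorr : ∀ i k, i ≠ k →
      ∫ ω, Δ i ω * Δ k ω ∂μ = (∫ ω, Δ i ω ∂μ) * ∫ ω, Δ k ω ∂μ)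
    (hp : ∀ i, 0 < p i) (hp1 : ∑' i, p i = 1)
    (hsum : Summable (fun i => (∫ ω, Δ i ω ^ 2 ∂μ) / p i))
    (hRmeas : Measurable R)
    (hRdist : ∀ i, μ {ω | R ω = i} = ENNReal.ofReal (p i))
    (hindep : IndepFun R (fun ω => fun i => Δ i ω) μ) :
    (∫ ω, Δ (R ω) ω / p (R ω) ∂μ = ∫ ω, Y ω ∂μ) ∧
      (∫ ω, (Δ (R ω) ω / p (R ω)) ^ 2 ∂μ = ∑' i, (∫ ω, Δ i ω ^ 2 ∂μ) / p i) := by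
  classical
  set S : ℕ → Set Ω := fun i => {ω | R ω = i} with hS
  have hSmeas : ∀ i, MeasurableSet (S i) := fun i => hRmeas (measurableSet_singleton i)
  -- summability of p
  have hpsum : Summable p := by
    by_contra h
    rw [tsum_eq_zero_of_not_summable h] at hp1
    norm_num at hp1
  -- the key independence computation
  have key : ∀ (i : ℕ) (ψ : (ℕ → ℝ) → ℝ), Measurable ψ →
      Integrable (fun ω => ψ (fun j => Δ j ω)) μ →
      ∫ ω, (S i).indicator (fun ω => ψ (fun j => Δ j ω)) ω ∂μ
        = p i * ∫ ω, ψ (fun j => Δ j ω) ∂μ := by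
    intro i ψ hψ hint
    have hind : IndepFun (fun ω => (({i} : Set ℕ).indicator (fun _ => (1:ℝ)) (R ω)))
        (fun ω => ψ (fun j => Δ j ω)) μ :=
      hindep.comp (φ := ({i} : Set ℕ).indicator (fun _ => (1:ℝ))) (ψ := ψ)
        measurable_from_top hψ
    have heq : ∀ ω, (S i).indicator (fun ω => ψ (fun j => Δ j ω)) ω
        = (({i} : Set ℕ).indicator (fun _ => (1:ℝ)) (R ω)) * ψ (fun j => Δ j ω) := by
      intro ω
      by_cases h : R ω = i <;> simp [Set.indicator, hS, h]
    have hindfun : (fun ω => ({i} : Set ℕ).indicator (fun _ => (1:ℝ)) (R ω))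
        = (S i).indicator (fun _ => (1:ℝ)) := by
      funext ω
      by_cases h : R ω = i <;> simp [Set.indicator, hS, h]
    have hindint : Integrable (fun ω => ({i} : Set ℕ).indicator (fun _ => (1:ℝ)) (R ω)) μ := by
      rw [hindfun]
      exact (integrable_const (1:ℝ)).indicator (hSmeas i)
    calc ∫ ω, (S i).indicator (fun ω => ψ (fun j => Δ j ω)) ω ∂μ
        = ∫ ω, (({i} : Set ℕ).indicator (fun _ => (1:ℝ)) (R ω)) * ψ (fun j => Δ j ω) ∂μ := by
          simp_rw [heq]
      _ = (∫ ω, ({i} : Set ℕ).indicator (fun _ => (1:ℝ)) (R ω) ∂μ)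
          * ∫ ω, ψ (fun j => Δ j ω) ∂μ := hind.integral_fun_mul_eq_mul_integral hindint.1 hint.1
      _ = p i * ∫ ω, ψ (fun j => Δ j ω) ∂μ := by
          rw [hindfun, integral_indicator_const _ (hSmeas i)]
          rw [hS]
          simp [measureReal_def, hRdist i, ENNReal.toReal_ofReal (hp i).le]
  -- integrability facts
  have hΔint : ∀ i, Integrable (Δ i) μ := fun i => (hΔsq i).integrable one_le_two
  have hΔsqint : ∀ i, Integrable (fun ω => Δ i ω ^ 2) μ := fun i => (hΔsq i).integrable_sq
  -- integrals of the pieces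
  have hfi : ∀ i, ∫ ω, (S i).indicator (fun ω => Δ i ω / p i) ω ∂μ = ∫ ω, Δ i ω ∂μ := by
    intro i
    have := key i (fun v => v i / p i) ((measurable_pi_apply i).div_const _)
      ((hΔint i).div_const _)
    rw [this, integral_div, mul_comm]
    exact div_mul_cancel₀ _ (hp i).ne'
  have habs : ∀ i, ∫ ω, |(S i).indicator (fun ω => Δ i ω / p i) ω| ∂μ
      = ∫ ω, |Δ i ω| ∂μ := by
    intro i
    have h1 : ∀ ω, |(S i).indicator (fun ω => Δ i ω / p i) ω|
        = (S i).indicator (fun ω => |Δ i ω / p i|) ω := by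
      intro ω
      by_cases h : ω ∈ S i <;> simp [Set.indicator, h]
    simp_rw [h1]
    have h2 : (fun ω => |Δ i ω / p i|) = fun ω => (fun v : ℕ → ℝ => |v i / p i|) (fun j => Δ j ω) := rfl
    have := key i (fun v => |v i / p i|) (((measurable_pi_apply i).div_const _).abs)
      (((hΔint i).div_const (p i)).abs)
    rw [h2, this]
    have h3 : ∫ ω, |Δ i ω / p i| ∂μ = (∫ ω, |Δ i ω| ∂μ) / p i := by
      simp_rw [abs_div, abs_of_pos (hp i), integral_div]
    rw [h3, mul_comm]
    exact div_mul_cancel₀ _ (hp i).ne'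
  have hsqi : ∀ i, ∫ ω, (S i).indicator (fun ω => (Δ i ω / p i) ^ 2) ω ∂μ
      = (∫ ω, Δ i ω ^ 2 ∂μ) / p i := by
    intro i
    have := key i (fun v => (v i / p i) ^ 2) (((measurable_pi_apply i).div_const _).pow_const 2)
      (by
        have : (fun ω => (Δ i ω / p i) ^ 2) = fun ω => Δ i ω ^ 2 / (p i) ^ 2 := by
          funext ω; rw [div_pow]
        rw [this]
        exact (hΔsqint i).div_const _)
    rw [this]
    have h2 : ∫ ω, (Δ i ω / p i) ^ 2 ∂μ = (∫ ω, Δ i ω ^ 2 ∂μ) / (p i) ^ 2 := by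
      simp_rw [div_pow, integral_div]
    rw [h2]
    have hpi := (hp i).ne'
    field_simp
  -- AM-GM bound : ∫|Δ i| ≤ b i, summable
  set b : ℕ → ℝ := fun i => ((∫ ω, Δ i ω ^ 2 ∂μ) / p i + p i) / 2 with hb
  have hbsum : Summable b := (hsum.add hpsum).div_const 2
  have hEabs : ∀ i, ∫ ω, |Δ i ω| ∂μ ≤ b i := by
    intro i
    have hpt : ∀ ω, |Δ i ω| ≤ (Δ i ω ^ 2 / p i + p i) / 2 := by
      intro ω
      have hpne : p i ≠ 0 := (hp i).ne'
      rw [← sq_abs (Δ i ω), le_div_iff₀ (show (0:ℝ) < 2 by norm_num),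
        div_add' _ _ _ hpne, le_div_iff₀ (hp i)]
      nlinarith [sq_nonneg (|Δ i ω| - p i)]
    calc ∫ ω, |Δ i ω| ∂μ ≤ ∫ ω, (Δ i ω ^ 2 / p i + p i) / 2 ∂μ :=
          integral_mono (hΔint i).abs
            ((((hΔsqint i).div_const _).add (integrable_const _)).div_const _) hpt
      _ = b i := by
          rw [integral_div, integral_add ((hΔsqint i).div_const _) (integrable_const _)]
          simp [hb, integral_div]
  have hEabs_nonneg : ∀ i, 0 ≤ ∫ ω, |Δ i ω| ∂μ := fun i =>
    integral_nonneg fun ω => abs_nonneg _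
  -- summability of means
  have hmeansum : Summable (fun i => ∫ ω, Δ i ω ∂μ) := by
    apply Summable.of_norm_bounded hbsum
    intro i
    calc ‖∫ ω, Δ i ω ∂μ‖ ≤ ∫ ω, ‖Δ i ω‖ ∂μ := norm_integral_le_integral_norm _
      _ ≤ b i := by simpa using hEabs i
  -- telescoping
  have htel : ∑' i, ∫ ω, Δ i ω ∂μ = ∫ ω, Y ω ∂μ := by
    have h1 := hmeansum.hasSum.tendsto_sum_nat
    have h2 : (fun n => ∑ i ∈ Finset.range n, ∫ ω, Δ i ω ∂μ)
        = fun n => ∫ ω, Yseq n ω ∂μ := by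
      funext n
      calc ∑ i ∈ Finset.range n, ∫ ω, Δ i ω ∂μ
          = ∑ i ∈ Finset.range n, ((∫ ω, Yseq (i + 1) ω ∂μ) - ∫ ω, Yseq i ω ∂μ) := by
            exact Finset.sum_congr rfl fun i _ => hΔmean i
        _ = (∫ ω, Yseq n ω ∂μ) - ∫ ω, Yseq 0 ω ∂μ := Finset.sum_range_sub (fun k => ∫ ω, Yseq k ω ∂μ) n
        _ = ∫ ω, Yseq n ω ∂μ := by rw [hY0, sub_zero]
    rw [h2] at h1
    exact tendsto_nhds_unique h1 hYlim
  -- pointwise decomposition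
  have hZ : ∀ ω, Δ (R ω) ω / p (R ω) = ∑' i, (S i).indicator (fun ω => Δ i ω / p i) ω := by
    intro ω
    rw [tsum_eq_single (R ω) (fun j hj => Set.indicator_of_notMem (by
      simp only [hS, Set.mem_setOf_eq]; exact fun h => hj h.symm) _)]
    exact (Set.indicator_of_mem (show ω ∈ S (R ω) from rfl)
      (fun ω' => Δ (R ω) ω' / p (R ω))).symm
  have hZ2 : ∀ ω, (Δ (R ω) ω / p (R ω)) ^ 2
      = ∑' i, (S i).indicator (fun ω => (Δ i ω / p i) ^ 2) ω := by
    intro ω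
    rw [tsum_eq_single (R ω) (fun j hj => Set.indicator_of_notMem (by
      simp only [hS, Set.mem_setOf_eq]; exact fun h => hj h.symm) _)]
    exact (Set.indicator_of_mem (show ω ∈ S (R ω) from rfl)
      (fun ω' => (Δ (R ω) ω' / p (R ω)) ^ 2)).symm
  -- integrability/measurability of pieces
  have hpieceint : ∀ i, Integrable ((S i).indicator (fun ω => Δ i ω / p i)) μ :=
    fun i => ((hΔint i).div_const _).indicator (hSmeas i)
  have hpiece2int : ∀ i, Integrable ((S i).indicator (fun ω => (Δ i ω / p i) ^ 2)) μ := by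
    intro i
    apply Integrable.indicator _ (hSmeas i)
    have : (fun ω => (Δ i ω / p i) ^ 2) = fun ω => Δ i ω ^ 2 / (p i) ^ 2 := by
      funext ω; rw [div_pow]
    rw [this]
    exact (hΔsqint i).div_const _
  constructor
  · -- first moment
    have hcond : ∑' i, ∫⁻ ω, ‖(S i).indicator (fun ω => Δ i ω / p i) ω‖ₑ ∂μ ≠ ⊤ := by
      have hle : ∀ i, ∫⁻ ω, ‖(S i).indicator (fun ω => Δ i ω / p i) ω‖ₑ ∂μ
          ≤ ENNReal.ofReal (b i) := by
        intro i
        rw [← ofReal_integral_norm_eq_lintegral_enorm (hpieceint i)]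
        apply ENNReal.ofReal_le_ofReal
        have hnorm : ∀ ω, ‖(S i).indicator (fun ω => Δ i ω / p i) ω‖
            = |(S i).indicator (fun ω => Δ i ω / p i) ω| := fun ω => rfl
        simp_rw [hnorm]
        rw [habs i]
        exact hEabs i
      have hbnn : ∀ i, 0 ≤ b i := fun i => le_trans (hEabs_nonneg i) (hEabs i)
      refine ne_top_of_le_ne_top ?_ (ENNReal.tsum_le_tsum hle)
      rw [← ENNReal.ofReal_tsum_of_nonneg hbnn hbsum]
      exact ENNReal.ofReal_ne_top
    have hmeas' : ∀ i, AEStronglyMeasurable ((S i).indicator (fun ω => Δ i ω / p i)) μ :=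
      fun i => (hpieceint i).1
    calc ∫ ω, Δ (R ω) ω / p (R ω) ∂μ
        = ∫ ω, ∑' i, (S i).indicator (fun ω => Δ i ω / p i) ω ∂μ := by simp_rw [hZ]
      _ = ∑' i, ∫ ω, (S i).indicator (fun ω => Δ i ω / p i) ω ∂μ :=
          integral_tsum hmeas' hcond
      _ = ∑' i, ∫ ω, Δ i ω ∂μ := by simp_rw [hfi]
      _ = ∫ ω, Y ω ∂μ := htel
  · -- second moment
    have hnonneg : ∀ i, ∀ ω, 0 ≤ (S i).indicator (fun ω => (Δ i ω / p i) ^ 2) ω :=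
      fun i ω => Set.indicator_nonneg (fun ω _ => sq_nonneg _) ω
    have hcond : ∑' i, ∫⁻ ω, ‖(S i).indicator (fun ω => (Δ i ω / p i) ^ 2) ω‖ₑ ∂μ ≠ ⊤ := by
      have heq : ∀ i, ∫⁻ ω, ‖(S i).indicator (fun ω => (Δ i ω / p i) ^ 2) ω‖ₑ ∂μ
          = ENNReal.ofReal ((∫ ω, Δ i ω ^ 2 ∂μ) / p i) := by
        intro i
        rw [← ofReal_integral_norm_eq_lintegral_enorm (hpiece2int i)]
        congr 1
        rw [← hsqi i]
        apply integral_congr_ae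
        filter_upwards with ω
        rw [Real.norm_eq_abs, abs_of_nonneg (hnonneg i ω)]
      simp_rw [heq]
      have hnn : ∀ i, 0 ≤ (∫ ω, Δ i ω ^ 2 ∂μ) / p i := fun i =>
        div_nonneg (integral_nonneg fun ω => sq_nonneg _) (hp i).le
      rw [← ENNReal.ofReal_tsum_of_nonneg hnn hsum]
      exact ENNReal.ofReal_ne_top
    have hmeas' : ∀ i, AEStronglyMeasurable ((S i).indicator (fun ω => (Δ i ω / p i) ^ 2)) μ :=
      fun i => (hpiece2int i).1
    calc ∫ ω, (Δ (R ω) ω / p (R ω)) ^ 2 ∂μ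
        = ∫ ω, ∑' i, (S i).indicator (fun ω => (Δ i ω / p i) ^ 2) ω ∂μ := by simp_rw [hZ2]
      _ = ∑' i, ∫ ω, (S i).indicator (fun ω => (Δ i ω / p i) ^ 2) ω ∂μ :=
          integral_tsum hmeas' hcond
      _ = ∑' i, (∫ ω, Δ i ω ^ 2 ∂μ) / p i := by simp_rw [hsqi]
end

section
/- Let (Δ_i)_{i≥1} be square-integrable random variables, (Δ_i^{(j)})_{i≥1}, j ≥ 1, independent copies of the process (Δ_i)_{i≥1}, and (N_i)_{i≥1} square-integrable nonnegative integer random variables independent of all Δ_i^{(j)} with E[N_i] > 0. For m ≥ 1 define the partial-sum estimator Z_m = ∑_{i=1}^m (E[N_i])^{-1} ∑_{j=1}^{N_i} Δ_i^{(j)}. Then for all 0 ≤ ℓ < m, E[(Z_m − Z_ℓ)²] = v_{ℓ,m} + (E[Y_m] − E[Y_ℓ])², where v_{ℓ,m} = ∑_{i,k=ℓ+1}^m [Cov(Δ_i, Δ_k) E[N_i ∧ N_k] + E[Δ_i] E[Δ_k] Cov(N_i, N_k)] / (E[N_i] E[N_k]), and E[Y_m] := ∑_{i=1}^m E[Δ_i].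 -/
open MeasureTheory ProbabilityTheory

/-- The quantity `v_{ℓ,m}` from the general unbiased scheme (sum over levels
`ℓ+1, …, m` of the paper, i.e. Lean indices in `Finset.Ico ℓ m`). -/
noncomputable def vlm {Ω : Type*} [MeasurableSpace Ω] (μ : Measure Ω)
    (Δ : ℕ → Ω → ℝ) (N : ℕ → Ω → ℕ) (ℓ m : ℕ) : ℝ :=
  ∑ i ∈ Finset.Ico ℓ m, ∑ k ∈ Finset.Ico ℓ m,
    (((∫ ω, Δ i ω * Δ k ω ∂μ) - (∫ ω, Δ i ω ∂μ) * ∫ ω, Δ k ω ∂μ)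
        * (∫ ω, (min (N i ω) (N k ω) : ℝ) ∂μ)
      + (∫ ω, Δ i ω ∂μ) * (∫ ω, Δ k ω ∂μ)
        * ((∫ ω, (N i ω : ℝ) * (N k ω : ℝ) ∂μ)
            - (∫ ω, (N i ω : ℝ) ∂μ) * ∫ ω, (N k ω : ℝ) ∂μ))
    / ((∫ ω, (N i ω : ℝ) ∂μ) * ∫ ω, (N k ω : ℝ) ∂μ)

section Aux
variable {Ω : Type*} [MeasurableSpace Ω] {μ : Measure Ω}

lemma my_integrable_mul [IsFiniteMeasure μ] {f g : Ω → ℝ} (hf : MemLp f 2 μ) (hg : MemLp g 2 μ) :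
    Integrable (fun ω => f ω * g ω) μ := by
  refine Integrable.mono' ((hf.integrable_sq.add hg.integrable_sq).div_const 2)
    (hf.aestronglyMeasurable.mul hg.aestronglyMeasurable)
    (Filter.Eventually.of_forall fun ω => ?_)
  simp only [Pi.add_apply, Real.norm_eq_abs, abs_mul]
  nlinarith [abs_nonneg (f ω), abs_nonneg (g ω), sq_abs (f ω), sq_abs (g ω),
    sq_nonneg (|f ω| - |g ω|)]

lemma my_count (a b : ℕ) (A B : ℝ) :
    ∑ j ∈ Finset.range a, ∑ j' ∈ Finset.range b, (if j = j' then A else B)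
      = (min a b : ℝ) * A + ((a : ℝ) * b - min a b) * B := by
  have h1 : ∀ j, ∑ j' ∈ Finset.range b, (if j = j' then A else B)
      = b * B + (if j ∈ Finset.range b then A - B else 0) := by
    intro j
    have : ∀ j' ∈ Finset.range b, (if j = j' then A else B)
        = B + (if j = j' then A - B else 0) := by
      intro j' _; by_cases h : j = j' <;> simp [h]
    rw [Finset.sum_congr rfl this, Finset.sum_add_distrib, Finset.sum_const,
      Finset.card_range, Finset.sum_ite_eq]
    simp [mul_comm]
  simp only [h1, Finset.sum_add_distrib, Finset.sum_const, Finset.card_range, nsmul_eq_mul]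
  have h2 : ∑ j ∈ Finset.range a, (if j ∈ Finset.range b then A - B else 0)
      = (min a b : ℝ) * (A - B) := by
    rw [Finset.sum_ite_mem]
    have : Finset.range a ∩ Finset.range b = Finset.range (min a b) := by
      ext x; simp [lt_min_iff]
    rw [this, Finset.sum_const, Finset.card_range, nsmul_eq_mul, Nat.cast_min]
  rw [h2]
  push_cast
  ring

lemma lemA (μ : Measure Ω) [IsProbabilityMeasure μ]
    (Δ : ℕ → Ω → ℝ) (Δc : ℕ → ℕ → Ω → ℝ) (N : ℕ → Ω → ℕ)
    (hΔsq : ∀ i, MemLp (Δ i) 2 μ)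
    (hΔcmeas : ∀ i j, Measurable (Δc i j))
    (hcopies : ∀ j, IdentDistrib (fun ω => fun i => Δc i j ω)
      (fun ω => fun i => Δ i ω) μ μ)
    (hcopyindep : iIndepFun
      (fun j => fun ω => fun i => Δc i j ω) μ)
    (hNmeas : ∀ i, Measurable (N i))
    (hNsq : ∀ i, MemLp (fun ω => (N i ω : ℝ)) 2 μ)
    (hNindep : IndepFun (fun ω => fun i => N i ω)
      (fun ω => fun q : ℕ × ℕ => Δc q.1 q.2 ω) μ)
    (i k : ℕ) :
    Integrable (fun ω => (∑ j ∈ Finset.range (N i ω), Δc i j ω)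
        * (∑ j ∈ Finset.range (N k ω), Δc k j ω)) μ ∧
    ∫ ω, (∑ j ∈ Finset.range (N i ω), Δc i j ω)
        * (∑ j ∈ Finset.range (N k ω), Δc k j ω) ∂μ
      = (∫ ω, Δ i ω * Δ k ω ∂μ) * (∫ ω, (min (N i ω) (N k ω) : ℝ) ∂μ)
        + (∫ ω, Δ i ω ∂μ) * (∫ ω, Δ k ω ∂μ)
          * ((∫ ω, (N i ω : ℝ) * (N k ω : ℝ) ∂μ)
              - ∫ ω, (min (N i ω) (N k ω) : ℝ) ∂μ) := by
  set A := ∫ ω, Δ i ω * Δ k ω ∂μ with hA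
  set B := (∫ ω, Δ i ω ∂μ) * (∫ ω, Δ k ω ∂μ) with hB
  -- identically distributed copies
  have mΔc : ∀ i' j, IdentDistrib (Δc i' j) (Δ i') μ μ := fun i' j =>
    (hcopies j).comp (measurable_pi_apply i')
  have hΔcsq : ∀ i' j, MemLp (Δc i' j) 2 μ := fun i' j =>
    (mΔc i' j).symm.memLp_snd (hΔsq i')
  have hEc : ∀ i' j, ∫ ω, Δc i' j ω ∂μ = ∫ ω, Δ i' ω ∂μ := fun i' j =>
    (mΔc i' j).integral_eq
  have hIcc : ∀ i' j k' j', Integrable (fun ω => Δc i' j ω * Δc k' j' ω) μ :=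
    fun i' j k' j' => my_integrable_mul (hΔcsq i' j) (hΔcsq k' j')
  have hEprod : ∀ j j', ∫ ω, Δc i j ω * Δc k j' ω ∂μ = if j = j' then A else B := by
    intro j j'
    by_cases h : j = j'
    · subst h
      simp only [if_pos rfl]
      exact ((hcopies j).comp
        ((measurable_pi_apply i).mul (measurable_pi_apply k))).integral_eq
    · simp only [if_neg h]
      have hind : IndepFun (Δc i j) (Δc k j') μ :=
        (hcopyindep.indepFun h).comp (measurable_pi_apply i) (measurable_pi_apply k)
      have := hind.integral_mul_eq_mul_integral ((hΔcsq i j).integrable one_le_two).aestronglyMeasurable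
        ((hΔcsq k j').integrable one_le_two).aestronglyMeasurable
      calc ∫ ω, Δc i j ω * Δc k j' ω ∂μ = integral μ (Δc i j * Δc k j') := rfl
        _ = (∫ ω, Δc i j ω ∂μ) * (∫ ω, Δc k j' ω ∂μ) := this
        _ = B := by rw [hEc, hEc]
  -- the product structure
  set Nv : Ω → ℕ → ℕ := fun ω i' => N i' ω with hNv
  set X : Ω → ℕ × ℕ → ℝ := fun ω q => Δc q.1 q.2 ω with hX
  have hNvm : Measurable Nv := measurable_pi_lambda _ hNmeas
  have hXm : Measurable X := measurable_pi_lambda _ fun q => hΔcmeas q.1 q.2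
  set ν := μ.map Nv with hν
  set κ := μ.map X with hκ
  have hmap : μ.map (fun ω => (Nv ω, X ω)) = ν.prod κ :=
    (indepFun_iff_map_prod_eq_prod_map_map hNvm.aemeasurable hXm.aemeasurable).mp hNindep
  haveI : IsProbabilityMeasure ν := Measure.isProbabilityMeasure_map hNvm.aemeasurable
  haveI : IsProbabilityMeasure κ := Measure.isProbabilityMeasure_map hXm.aemeasurable
  set F : (ℕ → ℕ) × (ℕ × ℕ → ℝ) → ℝ := fun p =>
    (∑ j ∈ Finset.range (p.1 i), p.2 (i, j))
      * (∑ j ∈ Finset.range (p.1 k), p.2 (k, j)) with hF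
  have hFm : Measurable F := by
    have h1 : ∀ l : ℕ, Measurable fun p : (ℕ → ℕ) × (ℕ × ℕ → ℝ) =>
        ∑ j ∈ Finset.range (p.1 l), p.2 (l, j) := by
      intro l
      have H : Measurable fun q : (ℕ × ℕ → ℝ) × ℕ => ∑ j ∈ Finset.range q.2, q.1 (l, j) :=
        measurable_from_prod_countable_left fun n =>
          Finset.measurable_sum (Finset.range n) fun j _ => measurable_pi_apply (l, j)
      exact H.comp (measurable_snd.prodMk ((measurable_pi_apply l).comp measurable_fst))
    exact (h1 i).mul (h1 k)
  -- rewrite F sections as double sums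
  have hFexp : ∀ (n : ℕ → ℕ) (ω : Ω), F (n, X ω)
      = ∑ j ∈ Finset.range (n i), ∑ j' ∈ Finset.range (n k), Δc i j ω * Δc k j' ω := by
    intro n ω
    simp only [hF, hX, Finset.sum_mul_sum]
  have hsecint : ∀ n : ℕ → ℕ, Integrable (fun ω => F (n, X ω)) μ := by
    intro n
    have : (fun ω => F (n, X ω)) = fun ω =>
        ∑ j ∈ Finset.range (n i), ∑ j' ∈ Finset.range (n k), Δc i j ω * Δc k j' ω :=
      funext fun ω => hFexp n ω
    rw [this]
    exact integrable_finset_sum _ fun j _ => integrable_finset_sum _ fun j' _ => hIcc i j k j'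
  have hsec : ∀ n : ℕ → ℕ, ∫ x, F (n, x) ∂κ
      = min (n i : ℝ) (n k : ℝ) * A + ((n i : ℝ) * (n k : ℝ) - min (n i : ℝ) (n k : ℝ)) * B := by
    intro n
    rw [hκ, integral_map (f := fun x => F (n, x)) hXm.aemeasurable
      ((hFm.comp measurable_prodMk_left).aestronglyMeasurable)]
    calc ∫ ω, F (n, X ω) ∂μ
        = ∫ ω, ∑ j ∈ Finset.range (n i), ∑ j' ∈ Finset.range (n k),
            Δc i j ω * Δc k j' ω ∂μ := by
          exact integral_congr_ae (Filter.Eventually.of_forall fun ω => hFexp n ω)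
      _ = ∑ j ∈ Finset.range (n i), ∑ j' ∈ Finset.range (n k),
            ∫ ω, Δc i j ω * Δc k j' ω ∂μ := by
          rw [integral_finset_sum _ fun j _ =>
            integrable_finset_sum _ fun j' _ => hIcc i j k j']
          exact Finset.sum_congr rfl fun j _ =>
            integral_finset_sum _ fun j' _ => hIcc i j k j'
      _ = ∑ j ∈ Finset.range (n i), ∑ j' ∈ Finset.range (n k),
            (if j = j' then A else B) := by
          exact Finset.sum_congr rfl fun j _ => Finset.sum_congr rfl fun j' _ => hEprod j j'
      _ = min (n i : ℝ) (n k : ℝ) * A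
            + ((n i : ℝ) * (n k : ℝ) - min (n i : ℝ) (n k : ℝ)) * B := by
          rw [my_count]
          push_cast [Nat.cast_min]
          ring
  -- integrability of F on the product measure
  have hEsq : ∀ (i' : ℕ) (j : ℕ), ∫ ω, Δc i' j ω ^ 2 ∂μ = ∫ ω, Δ i' ω ^ 2 ∂μ := by
    intro i' j
    exact ((mΔc i' j).comp (measurable_id.pow_const 2)).integral_eq
  set C := (∫ ω, Δ i ω ^ 2 ∂μ + ∫ ω, Δ k ω ^ 2 ∂μ) / 2 with hC
  have habs : ∀ j j', ∫ ω, |Δc i j ω * Δc k j' ω| ∂μ ≤ C := by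
    intro j j'
    have h1 : ∫ ω, |Δc i j ω * Δc k j' ω| ∂μ
        ≤ ∫ ω, (Δc i j ω ^ 2 + Δc k j' ω ^ 2) / 2 ∂μ := by
      refine integral_mono (hIcc i j k j').abs
        (((hΔcsq i j).integrable_sq.add (hΔcsq k j').integrable_sq).div_const 2) fun ω => ?_
      rw [abs_mul]
      nlinarith [sq_abs (Δc i j ω), sq_abs (Δc k j' ω),
        sq_nonneg (|Δc i j ω| - |Δc k j' ω|)]
    calc ∫ ω, |Δc i j ω * Δc k j' ω| ∂μ
        ≤ ∫ ω, (Δc i j ω ^ 2 + Δc k j' ω ^ 2) / 2 ∂μ := h1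
      _ = (∫ ω, Δc i j ω ^ 2 ∂μ + ∫ ω, Δc k j' ω ^ 2 ∂μ) / 2 := by
          rw [integral_div, integral_add (hΔcsq i j).integrable_sq (hΔcsq k j').integrable_sq]
      _ = C := by rw [hEsq i j, hEsq k j', hC]
  have hnorm_int : Integrable (fun n : ℕ → ℕ => ∫ x, ‖F (n, x)‖ ∂κ) ν := by
    have hg : Integrable (fun n : ℕ → ℕ => (n i : ℝ) * (n k : ℝ) * C) ν := by
      have hmeas : Measurable fun n : ℕ → ℕ => (n i : ℝ) * (n k : ℝ) * C :=
        (((measurable_from_top.comp (measurable_pi_apply i)).mul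
          (measurable_from_top.comp (measurable_pi_apply k))).mul_const C)
      rw [hν, integrable_map_measure hmeas.aestronglyMeasurable hNvm.aemeasurable]
      have : ((fun n : ℕ → ℕ => (n i : ℝ) * (n k : ℝ) * C) ∘ Nv)
          = fun ω => (N i ω : ℝ) * (N k ω : ℝ) * C := rfl
      rw [this]
      exact (my_integrable_mul (hNsq i) (hNsq k)).mul_const C
    refine Integrable.mono' hg ((hFm.norm.aestronglyMeasurable
      (μ := ν.prod κ)).integral_prod_right') (Filter.Eventually.of_forall fun n => ?_)
    rw [Real.norm_eq_abs, abs_of_nonneg (integral_nonneg fun x => norm_nonneg _)]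
    rw [hκ, integral_map (f := fun x => ‖F (n, x)‖) hXm.aemeasurable
      ((hFm.comp measurable_prodMk_left).norm.aestronglyMeasurable)]
    calc ∫ ω, ‖F (n, X ω)‖ ∂μ
        ≤ ∫ ω, ∑ j ∈ Finset.range (n i), ∑ j' ∈ Finset.range (n k),
            |Δc i j ω * Δc k j' ω| ∂μ := by
          refine integral_mono (hsecint n).norm
            (integrable_finset_sum _ fun j _ =>
              integrable_finset_sum _ fun j' _ => (hIcc i j k j').abs) fun ω => ?_
          rw [Real.norm_eq_abs, hFexp n ω]
          calc |∑ j ∈ Finset.range (n i), ∑ j' ∈ Finset.range (n k), Δc i j ω * Δc k j' ω|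
              ≤ ∑ j ∈ Finset.range (n i), |∑ j' ∈ Finset.range (n k), Δc i j ω * Δc k j' ω| :=
                Finset.abs_sum_le_sum_abs _ _
            _ ≤ ∑ j ∈ Finset.range (n i), ∑ j' ∈ Finset.range (n k), |Δc i j ω * Δc k j' ω| :=
                Finset.sum_le_sum fun j _ => Finset.abs_sum_le_sum_abs _ _
      _ = ∑ j ∈ Finset.range (n i), ∑ j' ∈ Finset.range (n k),
            ∫ ω, |Δc i j ω * Δc k j' ω| ∂μ := by
          rw [integral_finset_sum _ fun j _ =>
            integrable_finset_sum _ fun j' _ => (hIcc i j k j').abs]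
          exact Finset.sum_congr rfl fun j _ =>
            integral_finset_sum _ fun j' _ => (hIcc i j k j').abs
      _ ≤ ∑ j ∈ Finset.range (n i), ∑ j' ∈ Finset.range (n k), C := by
          exact Finset.sum_le_sum fun j _ => Finset.sum_le_sum fun j' _ => habs j j'
      _ = (n i : ℝ) * (n k : ℝ) * C := by
          simp [Finset.sum_const, Finset.card_range, mul_assoc]
  have hFint : Integrable F (ν.prod κ) := by
    rw [integrable_prod_iff hFm.aestronglyMeasurable]
    constructor
    · refine Filter.Eventually.of_forall fun n => ?_
      rw [hκ, integrable_map_measure (g := fun x => F (n, x))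
        ((hFm.comp measurable_prodMk_left).aestronglyMeasurable) hXm.aemeasurable]
      exact hsecint n
    · exact hnorm_int
  -- integrability of the min and product functions
  have hminmeas : Measurable fun ω => min (N i ω : ℝ) (N k ω : ℝ) :=
    (measurable_from_top.comp (hNmeas i)).min (measurable_from_top.comp (hNmeas k))
  have hmin_int : Integrable (fun ω => min (N i ω : ℝ) (N k ω : ℝ)) μ := by
    refine Integrable.mono' ((hNsq i).integrable one_le_two)
      hminmeas.aestronglyMeasurable (Filter.Eventually.of_forall fun ω => ?_)
    rw [Real.norm_eq_abs, abs_of_nonneg (le_min (by positivity) (by positivity))]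
    exact min_le_left _ _
  have hNN_int : Integrable (fun ω => (N i ω : ℝ) * (N k ω : ℝ)) μ :=
    my_integrable_mul (hNsq i) (hNsq k)
  -- the main computation
  have hpair : Measurable fun ω => (Nv ω, X ω) := hNvm.prodMk hXm
  have key : ∫ ω, (∑ j ∈ Finset.range (N i ω), Δc i j ω)
      * (∑ j ∈ Finset.range (N k ω), Δc k j ω) ∂μ
      = A * (∫ ω, min (N i ω : ℝ) (N k ω : ℝ) ∂μ)
        + B * ((∫ ω, (N i ω : ℝ) * (N k ω : ℝ) ∂μ)
            - ∫ ω, min (N i ω : ℝ) (N k ω : ℝ) ∂μ) := by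
    have e1 : ∫ ω, (∑ j ∈ Finset.range (N i ω), Δc i j ω)
        * (∑ j ∈ Finset.range (N k ω), Δc k j ω) ∂μ = ∫ p, F p ∂(ν.prod κ) := by
      rw [← hmap, integral_map hpair.aemeasurable hFm.aestronglyMeasurable]
    have e2 : ∫ p, F p ∂(ν.prod κ) = ∫ n, ∫ x, F (n, x) ∂κ ∂ν := integral_prod F hFint
    have e3 : ∫ n, ∫ x, F (n, x) ∂κ ∂ν
        = ∫ n : ℕ → ℕ, (min (n i : ℝ) (n k : ℝ) * A
            + ((n i : ℝ) * (n k : ℝ) - min (n i : ℝ) (n k : ℝ)) * B) ∂ν := by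
      exact integral_congr_ae (Filter.Eventually.of_forall fun n => hsec n)
    have hgm : Measurable fun n : ℕ → ℕ => (min (n i : ℝ) (n k : ℝ) * A
        + ((n i : ℝ) * (n k : ℝ) - min (n i : ℝ) (n k : ℝ)) * B) := by
      have hmi : Measurable fun n : ℕ → ℕ => (n i : ℝ) :=
        measurable_from_top.comp (measurable_pi_apply i)
      have hmk : Measurable fun n : ℕ → ℕ => (n k : ℝ) :=
        measurable_from_top.comp (measurable_pi_apply k)
      exact ((hmi.min hmk).mul_const A).add (((hmi.mul hmk).sub (hmi.min hmk)).mul_const B)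
    have e4 : ∫ n : ℕ → ℕ, (min (n i : ℝ) (n k : ℝ) * A
        + ((n i : ℝ) * (n k : ℝ) - min (n i : ℝ) (n k : ℝ)) * B) ∂ν
        = ∫ ω, (min (N i ω : ℝ) (N k ω : ℝ) * A
            + ((N i ω : ℝ) * (N k ω : ℝ) - min (N i ω : ℝ) (N k ω : ℝ)) * B) ∂μ := by
      rw [hν, integral_map hNvm.aemeasurable hgm.aestronglyMeasurable]
    have e5 : ∫ ω, (min (N i ω : ℝ) (N k ω : ℝ) * A
        + ((N i ω : ℝ) * (N k ω : ℝ) - min (N i ω : ℝ) (N k ω : ℝ)) * B) ∂μ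
        = A * (∫ ω, min (N i ω : ℝ) (N k ω : ℝ) ∂μ)
          + B * ((∫ ω, (N i ω : ℝ) * (N k ω : ℝ) ∂μ)
              - ∫ ω, min (N i ω : ℝ) (N k ω : ℝ) ∂μ) := by
      have g_int : Integrable (fun ω =>
          ((N i ω : ℝ) * (N k ω : ℝ) - min (N i ω : ℝ) (N k ω : ℝ)) * B) μ :=
        (hNN_int.sub hmin_int).mul_const B
      rw [integral_add (hmin_int.mul_const A) g_int,
        integral_mul_const, integral_mul_const, integral_sub hNN_int hmin_int]
      ring
    rw [e1, e2, e3, e4, e5]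
  constructor
  · -- integrability
    have h := integrable_map_measure (μ := μ) (f := fun ω => (Nv ω, X ω)) (g := F)
      hFm.aestronglyMeasurable hpair.aemeasurable
    have h2 : Integrable F (μ.map fun ω => (Nv ω, X ω)) := by rw [hmap]; exact hFint
    exact h.mp h2
  · rw [key]

end Aux

/-- Second-moment identity for the partial sums of the general unbiased scheme:
`E[(Z m − Z ℓ)²] = v_{ℓ,m} + (E[Y m] − E[Y ℓ])²`, where
`Z m = ∑_{i<m} (E N i)⁻¹ ∑_{j<N i} Δ i^{(j)}` and `E[Y m] = ∑_{i<m} E[Δ i]`. -/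
theorem general_scheme_second_moment
    {Ω : Type*} [MeasurableSpace Ω] (μ : Measure Ω) [IsProbabilityMeasure μ]
    (Δ : ℕ → Ω → ℝ) (Δc : ℕ → ℕ → Ω → ℝ) (N : ℕ → Ω → ℕ)
    (hΔmeas : ∀ i, Measurable (Δ i)) (hΔsq : ∀ i, MemLp (Δ i) 2 μ)
    (hΔcmeas : ∀ i j, Measurable (Δc i j))
    (hcopies : ∀ j, IdentDistrib (fun ω => fun i => Δc i j ω)
      (fun ω => fun i => Δ i ω) μ μ)
    (hcopyindep : iIndepFun
      (fun j => fun ω => fun i => Δc i j ω) μ)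
    (hNmeas : ∀ i, Measurable (N i))
    (hNsq : ∀ i, MemLp (fun ω => (N i ω : ℝ)) 2 μ)
    (hNpos : ∀ i, 0 < ∫ ω, (N i ω : ℝ) ∂μ)
    (hNindep : IndepFun (fun ω => fun i => N i ω)
      (fun ω => fun q : ℕ × ℕ => Δc q.1 q.2 ω) μ) :
    ∀ ℓ m : ℕ, ℓ < m →
      ∫ ω, ((∑ i ∈ Finset.range m, (∫ ω', (N i ω' : ℝ) ∂μ)⁻¹
              * ∑ j ∈ Finset.range (N i ω), Δc i j ω)
          - ∑ i ∈ Finset.range ℓ, (∫ ω', (N i ω' : ℝ) ∂μ)⁻¹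
              * ∑ j ∈ Finset.range (N i ω), Δc i j ω) ^ 2 ∂μ
        = vlm μ Δ N ℓ m + (∑ i ∈ Finset.Ico ℓ m, ∫ ω, Δ i ω ∂μ) ^ 2 := by
  intro ℓ m hlm
  have LA := fun i k => lemA μ Δ Δc N hΔsq hΔcmeas hcopies hcopyindep hNmeas hNsq hNindep i k
  set a : ℕ → ℝ := fun i => (∫ ω', (N i ω' : ℝ) ∂μ)⁻¹ with ha
  set S : ℕ → Ω → ℝ := fun i ω => ∑ j ∈ Finset.range (N i ω), Δc i j ω with hS
  have hrw : ∀ ω, ((∑ i ∈ Finset.range m, a i * S i ω)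
      - ∑ i ∈ Finset.range ℓ, a i * S i ω) ^ 2
      = ∑ i ∈ Finset.Ico ℓ m, ∑ k ∈ Finset.Ico ℓ m, (a i * a k) * (S i ω * S k ω) := by
    intro ω
    rw [← Finset.sum_Ico_eq_sub _ hlm.le, sq, Finset.sum_mul_sum]
    exact Finset.sum_congr rfl fun i _ => Finset.sum_congr rfl fun k _ => by ring
  calc ∫ ω, ((∑ i ∈ Finset.range m, a i * S i ω)
        - ∑ i ∈ Finset.range ℓ, a i * S i ω) ^ 2 ∂μ
      = ∫ ω, ∑ i ∈ Finset.Ico ℓ m, ∑ k ∈ Finset.Ico ℓ m,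
          (a i * a k) * (S i ω * S k ω) ∂μ :=
        integral_congr_ae (Filter.Eventually.of_forall hrw)
    _ = ∑ i ∈ Finset.Ico ℓ m, ∑ k ∈ Finset.Ico ℓ m,
          (a i * a k) * ∫ ω, S i ω * S k ω ∂μ := by
        rw [integral_finset_sum _ fun i _ =>
          integrable_finset_sum _ fun k _ => ((LA i k).1.const_mul _)]
        refine Finset.sum_congr rfl fun i _ => ?_
        rw [integral_finset_sum _ fun k _ => ((LA i k).1.const_mul _)]
        exact Finset.sum_congr rfl fun k _ => integral_const_mul _ _
    _ = ∑ i ∈ Finset.Ico ℓ m, ∑ k ∈ Finset.Ico ℓ m,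
          ((((∫ ω, Δ i ω * Δ k ω ∂μ) - (∫ ω, Δ i ω ∂μ) * ∫ ω, Δ k ω ∂μ)
              * (∫ ω, (min (N i ω) (N k ω) : ℝ) ∂μ)
            + (∫ ω, Δ i ω ∂μ) * (∫ ω, Δ k ω ∂μ)
              * ((∫ ω, (N i ω : ℝ) * (N k ω : ℝ) ∂μ)
                  - (∫ ω, (N i ω : ℝ) ∂μ) * ∫ ω, (N k ω : ℝ) ∂μ))
          / ((∫ ω, (N i ω : ℝ) ∂μ) * ∫ ω, (N k ω : ℝ) ∂μ)
          + (∫ ω, Δ i ω ∂μ) * ∫ ω, Δ k ω ∂μ) := by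
        refine Finset.sum_congr rfl fun i _ => Finset.sum_congr rfl fun k _ => ?_
        rw [(LA i k).2, ha]
        have hi := (hNpos i).ne'
        have hk := (hNpos k).ne'
        field_simp
        ring
    _ = vlm μ Δ N ℓ m + (∑ i ∈ Finset.Ico ℓ m, ∫ ω, Δ i ω ∂μ) ^ 2 := by
        rw [vlm]
        rw [sq, Finset.sum_mul_sum]
        rw [← Finset.sum_add_distrib]
        exact Finset.sum_congr rfl fun i _ => by rw [← Finset.sum_add_distrib]
end

section
/- For the coupled sum estimator: σ_{Σ,∞}² := ∑_{i≥1} (Var(Y − Y_{i−1}) − Var(Y − Y_i))/p̃_i satisfies σ_{Σ,∞}² = Var(Z_Σ^{(1)}) − ∑_{i≥1} (E[Y] − E[Y_i])² (1/p̃_{i+1} − 1/p̃_i), and every term in the subtracted sum is nonnegative since the tails p̃_i are nonincreasing. -/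
open MeasureTheory ProbabilityTheory Filter Finset Topology

lemma aux_tsum (a m t : ℕ → ℝ)
    (htpos : ∀ i, 0 < t i) (hmono : ∀ i, t (i + 1) ≤ t i)
    (hm0 : ∀ i, 0 ≤ m i) (hmle : ∀ i, m i ≤ a i)
    (hA : Summable fun i => a i / t i) :
    ∑' i, ((a i - m i) - (a (i + 1) - m (i + 1))) / t i
      = (∑' i, (a i - a (i + 1)) / t i - m 0 / t 0)
        - ∑' i, m (i + 1) * (1 / t (i + 1) - 1 / t i) := by
  have hA1 : Summable fun i => a (i + 1) / t (i + 1) := (summable_nat_add_iff 1).mpr hA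
  have ha0 : ∀ i, 0 ≤ a i := fun i => le_trans (hm0 i) (hmle i)
  have hbound : ∀ (u : ℕ → ℝ), (∀ i, 0 ≤ u i) → (∀ i, u i ≤ a i) →
      Summable fun i => (u i - u (i + 1)) / t i := by
    intro u hu0 hua
    apply Summable.of_abs
    apply Summable.of_nonneg_of_le (fun i => abs_nonneg _) (fun i => ?_) (hA.add hA1)
    rw [abs_div, abs_of_pos (htpos i)]
    have h1 : |u i - u (i + 1)| ≤ u i + u (i + 1) :=
      abs_le.mpr ⟨by linarith [hu0 i, hu0 (i + 1)], by linarith [hu0 i, hu0 (i + 1)]⟩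
    calc |u i - u (i + 1)| / t i ≤ (u i + u (i + 1)) / t i :=
          div_le_div_of_nonneg_right h1 (htpos i).le |>.trans_eq rfl
      _ = u i / t i + u (i + 1) / t i := add_div _ _ _
      _ ≤ a i / t i + a (i + 1) / t (i + 1) :=
          add_le_add (div_le_div₀ (ha0 i) (hua i) (htpos i) le_rfl)
            (div_le_div₀ (ha0 _) (hua _) (htpos _) (hmono i))
  have hfa : Summable fun i => (a i - a (i + 1)) / t i := hbound a ha0 fun i => le_rfl
  have hfm : Summable fun i => (m i - m (i + 1)) / t i := hbound m hm0 hmle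
  have hgnn : ∀ i, 0 ≤ m (i + 1) * (1 / t (i + 1) - 1 / t i) := fun i =>
    mul_nonneg (hm0 _) (sub_nonneg.2 (one_div_le_one_div_of_le (htpos (i + 1)) (hmono i)))
  have hg : Summable fun i => m (i + 1) * (1 / t (i + 1) - 1 / t i) := by
    apply Summable.of_nonneg_of_le hgnn (fun i => ?_) hA1
    calc m (i + 1) * (1 / t (i + 1) - 1 / t i) ≤ m (i + 1) * (1 / t (i + 1)) := by
          have := (one_div_pos.2 (htpos i)).le
          nlinarith [hm0 (i + 1)]
      _ = m (i + 1) / t (i + 1) := by ring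
      _ ≤ a (i + 1) / t (i + 1) := div_le_div₀ (ha0 _) (hmle _) (htpos _) le_rfl
  -- key partial sum identity
  have key : ∀ N, ∑ i ∈ Finset.range (N + 1), (m i - m (i + 1)) / t i
      = m 0 / t 0 + (∑ i ∈ Finset.range N, m (i + 1) * (1 / t (i + 1) - 1 / t i))
        - m (N + 1) / t N := by
    intro N
    induction N with
    | zero => simp [Finset.sum_range_one]; ring
    | succ N ih =>
      rw [Finset.sum_range_succ, ih, Finset.sum_range_succ]
      ring
  have hrlim : Tendsto (fun N => m (N + 1) / t N) atTop (𝓝 0) := by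
    apply squeeze_zero (fun N => div_nonneg (hm0 _) (htpos _).le)
      (fun N => div_le_div₀ (ha0 _) (hmle _) (htpos _) (hmono N))
    exact hA1.tendsto_atTop_zero
  have hSlim : Tendsto (fun N => ∑ i ∈ Finset.range (N + 1), (m i - m (i + 1)) / t i)
      atTop (𝓝 (∑' i, (m i - m (i + 1)) / t i)) :=
    hfm.hasSum.tendsto_sum_nat.comp (tendsto_add_atTop_nat 1)
  have hOlim : Tendsto (fun N => m 0 / t 0
        + (∑ i ∈ Finset.range N, m (i + 1) * (1 / t (i + 1) - 1 / t i)) - m (N + 1) / t N)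
      atTop (𝓝 (m 0 / t 0 + (∑' i, m (i + 1) * (1 / t (i + 1) - 1 / t i)) - 0)) :=
    (tendsto_const_nhds.add hg.hasSum.tendsto_sum_nat).sub hrlim
  have hTm : ∑' i, (m i - m (i + 1)) / t i
      = m 0 / t 0 + (∑' i, m (i + 1) * (1 / t (i + 1) - 1 / t i)) - 0 :=
    tendsto_nhds_unique (hSlim.congr fun N => (key N)) hOlim
  calc ∑' i, ((a i - m i) - (a (i + 1) - m (i + 1))) / t i
      = ∑' i, ((a i - a (i + 1)) / t i - (m i - m (i + 1)) / t i) :=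
        tsum_congr fun i => by ring
    _ = (∑' i, (a i - a (i + 1)) / t i) - ∑' i, (m i - m (i + 1)) / t i :=
        Summable.tsum_sub hfa hfm
    _ = _ := by rw [hTm]; ring

/-- Limiting per-sample variance of the coupled sum scheme.  Lean index `i` corresponds
to the paper's level `i+1`, `ptilde i := ∑_{j ≥ i} p j` is the paper's `p̃_{i+1}`, and
`Y 0 ≡ 0`.  Then
`σ_{Σ,∞}² = ∑_i (Var(Y − Y_{i−1}) − Var(Y − Y_i))/p̃_i` equals
`Var(Z_Σ⁽¹⁾) − ∑_i (E Y − E Y_i)² (1/p̃_{i+1} − 1/p̃_i)`, where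
`Var(Z_Σ⁽¹⁾) = ∑_i (E[(Y_{i−1} − Y)²] − E[(Y_i − Y)²])/p̃_i − (E Y)²`, and each term of
the subtracted sum is nonnegative. -/
theorem sigma_infty_vs_coupled_sum_variance
    {Ω : Type*} [MeasurableSpace Ω] (μ : Measure Ω) [IsProbabilityMeasure μ]
    (Ytarget : Ω → ℝ) (Y : ℕ → Ω → ℝ) (p : ℕ → ℝ)
    (hYt : MemLp Ytarget 2 μ) (hYi : ∀ i, MemLp (Y i) 2 μ)
    (hYmeas : ∀ i, Measurable (Y i))
    (hY0 : Y 0 = fun _ => 0)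
    (hp : ∀ i, 0 < p i) (hp1 : ∑' i, p i = 1)
    (hptail : ∀ i, 0 < ∑' j : ℕ, p (i + j))
    (hsum : Summable (fun i =>
      (∫ ω, (Y i ω - Ytarget ω) ^ 2 ∂μ) / ∑' j : ℕ, p (i + j))) :
    (∑' i, (variance (fun ω => Ytarget ω - Y i ω) μ
          - variance (fun ω => Ytarget ω - Y (i + 1) ω) μ) / ∑' j : ℕ, p (i + j))
        = ((∑' i, ((∫ ω, (Y i ω - Ytarget ω) ^ 2 ∂μ)
              - ∫ ω, (Y (i + 1) ω - Ytarget ω) ^ 2 ∂μ) / ∑' j : ℕ, p (i + j))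
            - (∫ ω, Ytarget ω ∂μ) ^ 2)
          - ∑' i, ((∫ ω, Ytarget ω ∂μ) - ∫ ω, Y (i + 1) ω ∂μ) ^ 2
              * (1 / (∑' j : ℕ, p (i + 1 + j)) - 1 / ∑' j : ℕ, p (i + j)) ∧
      ∀ i, 0 ≤ ((∫ ω, Ytarget ω ∂μ) - ∫ ω, Y (i + 1) ω ∂μ) ^ 2
          * (1 / (∑' j : ℕ, p (i + 1 + j)) - 1 / ∑' j : ℕ, p (i + j)) := by
  have hpsum : Summable p := by
    by_contra h
    rw [tsum_eq_zero_of_not_summable h] at hp1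
    norm_num at hp1
  -- tail monotonicity
  have hrec : ∀ i, (∑' j : ℕ, p (i + j)) = p i + ∑' j : ℕ, p (i + 1 + j) := by
    intro i
    have hsi : Summable fun j : ℕ => p (i + j) := by
      simpa [add_comm] using (summable_nat_add_iff i).mpr hpsum
    have h := Summable.tsum_eq_zero_add hsi
    simp only [add_zero] at h
    rw [h]
    congr 1
    exact tsum_congr fun j => by rw [show i + (j + 1) = i + 1 + j by omega]
  have hmono : ∀ i, (∑' j : ℕ, p (i + 1 + j)) ≤ ∑' j : ℕ, p (i + j) := by
    intro i; rw [hrec i]; linarith [hp i]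
  -- variance identity
  have hint : ∀ i, Integrable (Y i) μ := fun i => (hYi i).integrable one_le_two
  have hintt : Integrable Ytarget μ := hYt.integrable one_le_two
  have hvar : ∀ i, variance (fun ω => Ytarget ω - Y i ω) μ
      = (∫ ω, (Y i ω - Ytarget ω) ^ 2 ∂μ)
        - ((∫ ω, Ytarget ω ∂μ) - ∫ ω, Y i ω ∂μ) ^ 2 := by
    intro i
    rw [show (fun ω => Ytarget ω - Y i ω) = Ytarget - Y i from rfl,
      variance_eq_sub (hYt.sub (hYi i))]
    congr 1
    · exact integral_congr_ae (Filter.Eventually.of_forall fun ω => by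
        simp only [Pi.sub_apply, Pi.pow_apply]; ring)
    · simp only [Pi.sub_apply]
      rw [integral_sub hintt (hint i)]
  have hmle : ∀ i, ((∫ ω, Ytarget ω ∂μ) - ∫ ω, Y i ω ∂μ) ^ 2
      ≤ ∫ ω, (Y i ω - Ytarget ω) ^ 2 ∂μ := by
    intro i
    have := variance_nonneg (fun ω => Ytarget ω - Y i ω) μ
    rw [hvar i] at this
    linarith
  have key := aux_tsum (fun i => ∫ ω, (Y i ω - Ytarget ω) ^ 2 ∂μ)
    (fun i => ((∫ ω, Ytarget ω ∂μ) - ∫ ω, Y i ω ∂μ) ^ 2)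
    (fun i => ∑' j : ℕ, p (i + j)) hptail hmono (fun i => sq_nonneg _) hmle hsum
  beta_reduce at key
  have ht0 : (∑' j : ℕ, p (0 + j)) = 1 := by simpa using hp1
  have hm0 : ((∫ ω, Ytarget ω ∂μ) - ∫ ω, Y 0 ω ∂μ) ^ 2 = (∫ ω, Ytarget ω ∂μ) ^ 2 := by
    rw [hY0]; simp
  refine ⟨?_, fun i => mul_nonneg (sq_nonneg _)
    (sub_nonneg.2 (one_div_le_one_div_of_le (hptail (i + 1)) (hmono i)))⟩
  calc (∑' i, (variance (fun ω => Ytarget ω - Y i ω) μ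
          - variance (fun ω => Ytarget ω - Y (i + 1) ω) μ) / ∑' j : ℕ, p (i + j))
      = ∑' i, (((∫ ω, (Y i ω - Ytarget ω) ^ 2 ∂μ)
            - ((∫ ω, Ytarget ω ∂μ) - ∫ ω, Y i ω ∂μ) ^ 2)
          - ((∫ ω, (Y (i + 1) ω - Ytarget ω) ^ 2 ∂μ)
            - ((∫ ω, Ytarget ω ∂μ) - ∫ ω, Y (i + 1) ω ∂μ) ^ 2)) / ∑' j : ℕ, p (i + j) :=
        tsum_congr fun i => by rw [hvar i, hvar (i + 1)]
    _ = _ := by rw [key, ht0, hm0, div_one]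
end

section
/- Suppose (Δ_i)_{i≥1} are integrable, (Δ_i^{(j)}) are copies with the property that for σ-algebras (F_i)_{i≥0} and nonnegative integer random variables N_i with E[N_i | F_{i−1}] ∈ (0,∞) a.s., one has E[Δ_i^{(j)} 1{j ≤ N_i} | F_{i−1}] = (E[Y_i] − E[Y_{i−1}]) P(j ≤ N_i | F_{i−1}) a.s., and E[|Δ_i^{(j)}| 1{j ≤ N_i} | F_{i−1}] ≤ C_i P(j ≤ N_i | F_{i−1}) with c_i = E[C_i] < ∞. Then Z_m := ∑_{i=1}^m (E[N_i | F_{i−1}])^{-1} ∑_{j≥1} Δ_i^{(j)} 1{j ≤ N_i} satisfies E[Z_m] = E[Y_m]. If moreover ∑_i c_i < ∞ and ∑_i N_i < ∞ a.s., then Z := lim_{m→∞} Z_m exists a.s. and E[Z] = E[Y]. -/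
open MeasureTheory ProbabilityTheory Filter

open scoped ENNReal

lemma aemeasurable_tsum_of_summable {Ω : Type*} {mΩ : MeasurableSpace Ω} {μ : Measure Ω}
    {f : ℕ → Ω → ℝ} (hmeas : ∀ j, Measurable (f j))
    (h : ∀ᵐ ω ∂μ, Summable (fun j => f j ω)) :
    AEMeasurable (fun ω => ∑' j, f j ω) μ := by
  refine aemeasurable_of_tendsto_metrizable_ae atTop
    (fun k => (Finset.measurable_sum (Finset.range k) (fun j _ => hmeas j)).aemeasurable) ?_
  filter_upwards [h] with ω hω
  exact hω.hasSum.tendsto_sum_nat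

lemma measurable_tsum_of_summable {Ω : Type*} {mΩ : MeasurableSpace Ω}
    {f : ℕ → Ω → ℝ} (hmeas : ∀ j, Measurable (f j)) (h : ∀ ω, Summable (fun j => f j ω)) :
    Measurable (fun ω => ∑' j, f j ω) := by
  refine measurable_of_tendsto_metrizable
    (fun k => Finset.measurable_sum (Finset.range k) (fun j _ => hmeas j)) ?_
  rw [tendsto_pi_nhds]
  intro ω
  exact (h ω).hasSum.tendsto_sum_nat

lemma dep_level {Ω : Type*} {mΩ : MeasurableSpace Ω} (μ : Measure Ω)
    [IsProbabilityMeasure μ] (F : MeasurableSpace Ω) (hF : F ≤ mΩ)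
    (Δ : ℕ → Ω → ℝ) (N : Ω → ℕ) (C : Ω → ℝ) (d : ℝ)
    (hΔmeas : ∀ j, Measurable[mΩ] (Δ j)) (hNmeas : Measurable[mΩ] N)
    (hNint : Integrable (fun ω => (N ω : ℝ)) μ)
    (hXint : ∀ j, Integrable (fun ω => if j < N ω then Δ j ω else 0) μ)
    (hgpos : ∀ᵐ ω ∂μ, 0 < (μ[fun ω' => (N ω' : ℝ)|F]) ω)
    (hconsist : ∀ j, (μ[fun ω => if j < N ω then Δ j ω else 0|F]) =ᵐ[μ]
      fun ω => d * (μ[fun ω' => if j < N ω' then (1 : ℝ) else 0|F]) ω)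
    (hCint : Integrable C μ)
    (hbound : ∀ j, ∀ᵐ ω ∂μ, (μ[fun ω' => if j < N ω' then |Δ j ω'| else 0|F]) ω
      ≤ C ω * (μ[fun ω' => if j < N ω' then (1 : ℝ) else 0|F]) ω) :
    Integrable (fun ω => ((μ[fun ω' => (N ω' : ℝ)|F]) ω)⁻¹
        * ∑' j : ℕ, if j < N ω then Δ j ω else 0) μ ∧
      ∫ ω, ((μ[fun ω' => (N ω' : ℝ)|F]) ω)⁻¹ * ∑' j : ℕ, (if j < N ω then Δ j ω else 0) ∂μ = d ∧
      ∫ ω, |((μ[fun ω' => (N ω' : ℝ)|F]) ω)⁻¹ * ∑' j : ℕ, (if j < N ω then Δ j ω else 0)| ∂μ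
        ≤ ∫ ω, C ω ∂μ := by
  classical
  letI : MeasurableSpace Ω := mΩ
  set g : Ω → ℝ := μ[fun ω' => (N ω' : ℝ)|F] with hgdef
  set P : ℕ → Ω → ℝ := fun j => μ[fun ω' => if j < N ω' then (1 : ℝ) else 0|F] with hPdef
  set X : ℕ → Ω → ℝ := fun j ω => if j < N ω then Δ j ω else 0 with hXdef
  have hXite : ∀ j ω, (if j < N ω then Δ j ω else 0) = X j ω := fun _ _ => rfl
  have hgSM : StronglyMeasurable[F] g := stronglyMeasurable_condExp
  have hgSMinv : StronglyMeasurable[F] fun ω => (g ω)⁻¹ :=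
    hgSM.measurable.inv.stronglyMeasurable
  have hgmeas : Measurable[mΩ] g := (hgSM.mono hF).measurable
  have hPSM : ∀ j, StronglyMeasurable[F] (P j) := fun j => stronglyMeasurable_condExp
  have hPmeas : ∀ j, Measurable[mΩ] (P j) := fun j => ((hPSM j).mono hF).measurable
  have hNset : ∀ j : ℕ, MeasurableSet[mΩ] {ω | j < N ω} := fun j => hNmeas measurableSet_Ioi
  have hXmeas : ∀ j, Measurable[mΩ] (X j) := fun j =>
    Measurable.ite (hNset j) (hΔmeas j) measurable_const
  have hImeas : ∀ j, Measurable[mΩ] (fun ω => if j < N ω then (1 : ℝ) else 0) := fun j =>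
    Measurable.ite (hNset j) measurable_const measurable_const
  have hI0 : ∀ j ω, 0 ≤ (if j < N ω then (1 : ℝ) else 0) := fun j ω => by
    by_cases h : j < N ω <;> simp [h]
  have hIleN : ∀ j ω, (if j < N ω then (1 : ℝ) else 0) ≤ (N ω : ℝ) := fun j ω => by
    by_cases h : j < N ω
    · simp only [h, if_true]
      have h1 : 1 ≤ N ω := by omega
      exact_mod_cast h1
    · simp [h]
  have hIint : ∀ j, Integrable (fun ω => if j < N ω then (1 : ℝ) else 0) μ := fun j => by
    refine Integrable.mono' (μ := μ) (integrable_const 1) (hImeas j).aestronglyMeasurable ?_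
    refine Eventually.of_forall fun ω => ?_
    by_cases h : j < N ω <;> simp [h]
  have hP0 : ∀ j, 0 ≤ᵐ[μ] P j := fun j => condExp_nonneg (Eventually.of_forall (hI0 j))
  have hPle : ∀ j, P j ≤ᵐ[μ] g := fun j =>
    condExp_mono (hIint j) hNint (Eventually.of_forall (hIleN j))
  -- partial sums of indicators are at most N
  have hindsum : ∀ (k : ℕ) (ω : Ω),
      ∑ j ∈ Finset.range k, (if j < N ω then (1 : ℝ) else 0) ≤ (N ω : ℝ) := by
    intro k ω
    rw [Finset.sum_boole]
    have hsub : (Finset.range k).filter (fun j => j < N ω) ⊆ Finset.range (N ω) := by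
      intro j hj
      simp only [Finset.mem_filter, Finset.mem_range] at hj ⊢
      exact hj.2
    have := Finset.card_le_card hsub
    rw [Finset.card_range] at this
    exact_mod_cast this
  have hPpart : ∀ k : ℕ, ∀ᵐ ω ∂μ, ∑ j ∈ Finset.range k, P j ω ≤ g ω := by
    intro k
    have h1 : μ[fun ω => ∑ j ∈ Finset.range k, (if j < N ω then (1 : ℝ) else 0)|F]
        =ᵐ[μ] fun ω => ∑ j ∈ Finset.range k, P j ω := by
      have h := condExp_finsetSum (m := F) (μ := μ) (s := Finset.range k)
        (f := fun j ω => if j < N ω then (1 : ℝ) else 0) (fun j _ => hIint j)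
      have hfun : (∑ i ∈ Finset.range k, fun ω => if i < N ω then (1 : ℝ) else 0)
          = fun ω => ∑ j ∈ Finset.range k, (if j < N ω then (1 : ℝ) else 0) := by
        funext ω; simp [Finset.sum_apply]
      rw [hfun] at h
      refine h.trans (Eventually.of_forall fun ω => ?_)
      simp only [Finset.sum_apply, hPdef]
    have h2 := condExp_mono (m := F) (μ := μ)
      (integrable_finset_sum (Finset.range k) (fun j _ => hIint j)) hNint
      (Eventually.of_forall fun ω => hindsum k ω)
    filter_upwards [h1.symm.le.trans h2] with ω hω
    exact hω
  have hPsum : ∀ᵐ ω ∂μ, (∀ j, 0 ≤ P j ω) ∧ Summable (fun j => P j ω) ∧ ∑' j, P j ω ≤ g ω := by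
    filter_upwards [ae_all_iff.2 hP0, ae_all_iff.2 hPpart] with ω h0 hpart
    have hs : Summable (fun j => P j ω) := summable_of_sum_range_le h0 hpart
    exact ⟨h0, hs, hs.tsum_le_of_sum_range_le hpart⟩
  have hgint : Integrable g μ := integrable_condExp
  have hg0 : 0 ≤ᵐ[μ] g := hgpos.mono fun ω h => h.le
  -- lintegral of N
  have htsumN : ∀ ω, (∑' j : ℕ, if j < N ω then (1 : ℝ≥0∞) else 0) = (N ω : ℝ≥0∞) := by
    intro ω
    rw [tsum_eq_sum (s := Finset.range (N ω)) (by
      intro j hj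
      exact if_neg fun h => hj (Finset.mem_range.2 h))]
    rw [Finset.sum_congr rfl (fun j hj => if_pos (Finset.mem_range.1 hj))]
    simp
  have hPlin : ∀ j, ∫⁻ ω, ENNReal.ofReal (P j ω) ∂μ
      = ∫⁻ ω, (if j < N ω then (1 : ℝ≥0∞) else 0) ∂μ := by
    intro j
    rw [← ofReal_integral_eq_lintegral_ofReal integrable_condExp (hP0 j)]
    have : ∫ ω, P j ω ∂μ = ∫ ω, (if j < N ω then (1 : ℝ) else 0) ∂μ :=
      integral_condExp hF
    rw [this, ofReal_integral_eq_lintegral_ofReal (hIint j) (Eventually.of_forall (hI0 j))]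
    refine lintegral_congr fun ω => ?_
    by_cases h : j < N ω <;> simp [h]
  have hsumP : ∑' j, ∫⁻ ω, ENNReal.ofReal (P j ω) ∂μ = ∫⁻ ω, (N ω : ℝ≥0∞) ∂μ := by
    rw [tsum_congr hPlin,
      ← lintegral_tsum (fun j => (Measurable.ite (hNset j) measurable_const
        measurable_const).aemeasurable)]
    exact lintegral_congr htsumN
  have hglin : ∫⁻ ω, ENNReal.ofReal (g ω) ∂μ = ∫⁻ ω, (N ω : ℝ≥0∞) ∂μ := by
    rw [← ofReal_integral_eq_lintegral_ofReal hgint hg0]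
    have : ∫ ω, g ω ∂μ = ∫ ω, (N ω : ℝ) ∂μ := integral_condExp hF
    rw [this, ofReal_integral_eq_lintegral_ofReal hNint
      (Eventually.of_forall fun ω => Nat.cast_nonneg _)]
    exact lintegral_congr fun ω => by rw [ENNReal.ofReal_natCast]
  have hTmeas : AEMeasurable (fun ω => ∑' j, P j ω) μ :=
    aemeasurable_tsum_of_summable hPmeas (hPsum.mono fun ω h => h.2.1)
  have hT0 : 0 ≤ᵐ[μ] fun ω => ∑' j, P j ω := hPsum.mono fun ω h => tsum_nonneg h.1
  have hTle : (fun ω => ∑' j, P j ω) ≤ᵐ[μ] g := hPsum.mono fun ω h => h.2.2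
  have hTint : Integrable (fun ω => ∑' j, P j ω) μ := by
    refine Integrable.mono hgint hTmeas.aestronglyMeasurable ?_
    filter_upwards [hT0, hTle, hg0] with ω h0 hle hgω
    rw [Real.norm_eq_abs, Real.norm_eq_abs, abs_of_nonneg h0, abs_of_nonneg hgω]
    exact hle
  have hTval : ∫ ω, (∑' j, P j ω) ∂μ = ∫ ω, g ω ∂μ := by
    rw [integral_eq_lintegral_of_nonneg_ae hT0 hTmeas.aestronglyMeasurable,
      integral_eq_lintegral_of_nonneg_ae hg0 (hgSM.mono hF).aestronglyMeasurable]
    congr 1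
    calc ∫⁻ ω, ENNReal.ofReal (∑' j, P j ω) ∂μ
        = ∫⁻ ω, ∑' j, ENNReal.ofReal (P j ω) ∂μ := by
          refine lintegral_congr_ae ?_
          filter_upwards [hPsum] with ω h
          exact ENNReal.ofReal_tsum_of_nonneg h.1 h.2.1
      _ = ∑' j, ∫⁻ ω, ENNReal.ofReal (P j ω) ∂μ :=
          lintegral_tsum fun j => (ENNReal.measurable_ofReal.comp (hPmeas j)).aemeasurable
      _ = ∫⁻ ω, (N ω : ℝ≥0∞) ∂μ := hsumP
      _ = ∫⁻ ω, ENNReal.ofReal (g ω) ∂μ := hglin.symm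
  have hTg : ∀ᵐ ω ∂μ, (∑' j, P j ω) = g ω := by
    have hsub : Integrable (fun ω => g ω - ∑' j, P j ω) μ := hgint.sub hTint
    have h0 : 0 ≤ᵐ[μ] fun ω => g ω - ∑' j, P j ω := hTle.mono fun ω h => sub_nonneg.2 h
    have hz : ∫ ω, (g ω - ∑' j, P j ω) ∂μ = 0 := by
      rw [integral_sub hgint hTint, hTval]; ring
    have h := (integral_eq_zero_iff_of_nonneg_ae h0 hsub).1 hz
    filter_upwards [h] with ω hω
    have : g ω - ∑' j, P j ω = 0 := hω
    linarith
  have hAcond0 : ∀ j, 0 ≤ᵐ[μ] μ[fun ω' => if j < N ω' then |Δ j ω'| else 0|F] := fun j =>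
    condExp_nonneg (Eventually.of_forall fun ω => by by_cases h : j < N ω <;> simp [h])
  have hC0 : 0 ≤ᵐ[μ] C := by
    filter_upwards [hTg, hgpos, hPsum, ae_all_iff.2 hbound, ae_all_iff.2 hAcond0]
      with ω ht hgω hp hb ha
    by_contra hc
    push_neg at hc
    have hex : ∃ j, 0 < P j ω := by
      by_contra hall
      push_neg at hall
      have hz : ∀ j, P j ω = 0 := fun j => le_antisymm (hall j) (hp.1 j)
      have : (∑' j, P j ω) = 0 := by simp [hz]
      rw [this] at ht
      exact absurd ht.symm (ne_of_gt hgω)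
    obtain ⟨j, hj⟩ := hex
    exact absurd (lt_of_le_of_lt (le_trans (ha j) (hb j))
      (mul_neg_of_neg_of_pos hc hj)) (lt_irrefl 0)
  -- common a.e. facts
  have hbase : ∀ᵐ ω ∂μ, 0 < g ω ∧ (∀ j, 0 ≤ P j ω) ∧ (∀ j, P j ω ≤ g ω)
      ∧ Summable (fun j => P j ω) ∧ (∑' j, P j ω) = g ω ∧ 0 ≤ C ω := by
    filter_upwards [hgpos, hPsum, ae_all_iff.2 hPle, hTg, hC0] with ω h1 h2 h3 h4 h5
    exact ⟨h1, h2.1, h3, h2.2.1, h4, h5⟩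
  -- facts about B j = g⁻¹ * (C * P j)
  have hBfacts : ∀ j, ∀ᵐ ω ∂μ, 0 ≤ (g ω)⁻¹ * (C ω * P j ω)
      ∧ (g ω)⁻¹ * (C ω * P j ω) ≤ C ω := by
    intro j
    filter_upwards [hbase] with ω h
    obtain ⟨hg, hp0, hple, _, _, hc⟩ := h
    constructor
    · exact mul_nonneg (inv_nonneg.2 hg.le) (mul_nonneg hc (hp0 j))
    · calc (g ω)⁻¹ * (C ω * P j ω) ≤ (g ω)⁻¹ * (C ω * g ω) :=
          mul_le_mul_of_nonneg_left (mul_le_mul_of_nonneg_left (hple j) hc)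
            (inv_nonneg.2 hg.le)
        _ = C ω := by
          rw [mul_comm (C ω) (g ω), ← mul_assoc, inv_mul_cancel₀ hg.ne', one_mul]
  have hBint : ∀ j, Integrable (fun ω => (g ω)⁻¹ * (C ω * P j ω)) μ := by
    intro j
    refine Integrable.mono hCint ((hgmeas.inv.aestronglyMeasurable).mul
      (hCint.1.mul (hPmeas j).aestronglyMeasurable)) ?_
    filter_upwards [hBfacts j, hC0] with ω hb hc
    rw [Real.norm_eq_abs, Real.norm_eq_abs, abs_of_nonneg hb.1, abs_of_nonneg hc]
    exact hb.2
  -- facts about W j = g⁻¹ * P j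
  have hWfacts : ∀ j, ∀ᵐ ω ∂μ, 0 ≤ (g ω)⁻¹ * P j ω ∧ (g ω)⁻¹ * P j ω ≤ 1 := by
    intro j
    filter_upwards [hbase] with ω h
    obtain ⟨hg, hp0, hple, _, _, _⟩ := h
    refine ⟨mul_nonneg (inv_nonneg.2 hg.le) (hp0 j), ?_⟩
    calc (g ω)⁻¹ * P j ω ≤ (g ω)⁻¹ * g ω :=
        mul_le_mul_of_nonneg_left (hple j) (inv_nonneg.2 hg.le)
      _ = 1 := inv_mul_cancel₀ hg.ne'
  have hWint : ∀ j, Integrable (fun ω => (g ω)⁻¹ * P j ω) μ := by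
    intro j
    refine Integrable.mono (integrable_const (1 : ℝ))
      ((hgmeas.inv.mul (hPmeas j)).aestronglyMeasurable) ?_
    filter_upwards [hWfacts j] with ω hw
    rw [Real.norm_eq_abs, abs_of_nonneg hw.1]
    simpa using hw.2
  -- truncation sequence
  set fn : ℕ → Ω → ℝ := fun n ω => max 0 (min ((g ω)⁻¹) n) with hfndef
  have hfnSM : ∀ n, StronglyMeasurable[F] (fn n) := fun n =>
    (continuous_const.max (continuous_id.min continuous_const)).comp_stronglyMeasurable hgSMinv
  have hfnbd : ∀ (n : ℕ) ω, ‖fn n ω‖ ≤ (n : ℝ) := by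
    intro n ω
    rw [Real.norm_eq_abs, abs_of_nonneg (le_max_left _ _)]
    exact max_le (Nat.cast_nonneg n) (min_le_right _ _)
  have hfnmono : ∀ ω, Monotone fun n : ℕ => fn n ω := fun ω a b hab =>
    max_le_max le_rfl (min_le_min le_rfl (Nat.cast_le.2 hab))
  have hfn0 : ∀ (n : ℕ) ω, 0 ≤ fn n ω := fun n ω => le_max_left _ _
  have hfnle : ∀ᵐ ω ∂μ, ∀ n : ℕ, fn n ω ≤ (g ω)⁻¹ :=
    hgpos.mono fun ω hg n => max_le (inv_nonneg.2 hg.le) (min_le_left _ _)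
  have hfntend : ∀ᵐ ω ∂μ, Tendsto (fun n : ℕ => fn n ω) atTop (nhds ((g ω)⁻¹)) := by
    refine hgpos.mono fun ω hg => ?_
    refine tendsto_atTop_of_eventually_const (i₀ := ⌈(g ω)⁻¹⌉₊) fun n hn => ?_
    have h1 : (g ω)⁻¹ ≤ (n : ℝ) := le_trans (Nat.le_ceil _) (Nat.cast_le.2 hn)
    simp only [hfndef]
    rw [min_eq_left h1, max_eq_right (inv_nonneg.2 hg.le)]
  -- rewrite the bound hypothesis via |X j|
  have hAeq : ∀ j, (fun ω => if j < N ω then |Δ j ω| else 0) = fun ω => |X j ω| := by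
    intro j
    funext ω
    by_cases h : j < N ω <;> simp [hXdef, h]
  have habs : ∀ j, ∀ᵐ ω ∂μ, (μ[(fun ω' => |X j ω'|)|F]) ω ≤ C ω * P j ω := by
    intro j
    have h := hbound j
    rw [hAeq j] at h
    exact h
  have hEpos : ∀ j, 0 ≤ᵐ[μ] μ[(fun ω' => |X j ω'|)|F] := by
    intro j
    have h := hAcond0 j
    rw [hAeq j] at h
    exact h
  have hAint : ∀ j, Integrable (fun ω => |X j ω|) μ := fun j => (hXint j).abs
  -- main truncated estimate
  have hstep : ∀ (n : ℕ) (j : ℕ), ∫ ω, fn n ω * |X j ω| ∂μ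
      ≤ ∫ ω, (g ω)⁻¹ * (C ω * P j ω) ∂μ := by
    intro n j
    have hmuln : Integrable (fun ω => fn n ω * |X j ω|) μ :=
      (hAint j).bdd_mul (((hfnSM n).mono hF).aestronglyMeasurable)
        (Eventually.of_forall (hfnbd n))
    have hpull := condExp_stronglyMeasurable_mul_of_bound hF (hfnSM n) (hAint j) n
      (Eventually.of_forall (hfnbd n))
    have h1 : ∫ ω, fn n ω * |X j ω| ∂μ
        = ∫ ω, fn n ω * (μ[(fun ω' => |X j ω'|)|F]) ω ∂μ := by
      rw [← integral_condExp (μ := μ) hF (f := fun ω => fn n ω * |X j ω|)]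
      refine integral_congr_ae ?_
      filter_upwards [hpull] with ω h
      exact h
    rw [h1]
    have hint2 : Integrable (fun ω => fn n ω * (μ[(fun ω' => |X j ω'|)|F]) ω) μ :=
      integrable_condExp.bdd_mul (((hfnSM n).mono hF).aestronglyMeasurable)
        (Eventually.of_forall (hfnbd n))
    refine integral_mono_ae hint2 (hBint j) ?_
    filter_upwards [habs j, hEpos j, hfnle, hbase] with ω hb he hle hb'
    calc fn n ω * (μ[(fun ω' => |X j ω'|)|F]) ω
        ≤ fn n ω * (C ω * P j ω) := mul_le_mul_of_nonneg_left hb (hfn0 n ω)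
      _ ≤ (g ω)⁻¹ * (C ω * P j ω) := mul_le_mul_of_nonneg_right (hle n)
          (mul_nonneg hb'.2.2.2.2.2 (hb'.2.1 j))
  -- monotone convergence
  have hUbd : ∀ j, ∫⁻ ω, ENNReal.ofReal ((g ω)⁻¹ * |X j ω|) ∂μ
      ≤ ENNReal.ofReal (∫ ω, (g ω)⁻¹ * (C ω * P j ω) ∂μ) := by
    intro j
    have hmeasn : ∀ n : ℕ, AEMeasurable (fun ω => ENNReal.ofReal (fn n ω * |X j ω|)) μ := by
      intro n
      have hm : Measurable[mΩ] (fn n) := ((hfnSM n).mono hF).measurable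
      exact (ENNReal.measurable_ofReal.comp (hm.mul (hXmeas j).abs)).aemeasurable
    have hmono : ∀ᵐ ω ∂μ, Monotone fun n : ℕ => ENNReal.ofReal (fn n ω * |X j ω|) :=
      Eventually.of_forall fun ω a b hab => ENNReal.ofReal_le_ofReal
        (mul_le_mul_of_nonneg_right (hfnmono ω hab) (abs_nonneg _))
    have htend : ∀ᵐ ω ∂μ, Tendsto (fun n : ℕ => ENNReal.ofReal (fn n ω * |X j ω|)) atTop
        (nhds (ENNReal.ofReal ((g ω)⁻¹ * |X j ω|))) := by
      filter_upwards [hfntend] with ω hω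
      exact (ENNReal.continuous_ofReal.tendsto _).comp (hω.mul_const _)
    have hlim := lintegral_tendsto_of_tendsto_of_monotone hmeasn hmono htend
    refine le_of_tendsto hlim (Eventually.of_forall fun n => ?_)
    rw [← ofReal_integral_eq_lintegral_ofReal
      ((hAint j).bdd_mul (((hfnSM n).mono hF).aestronglyMeasurable)
        (Eventually.of_forall (hfnbd n)))
      (Eventually.of_forall fun ω => mul_nonneg (hfn0 n ω) (abs_nonneg _))]
    exact ENNReal.ofReal_le_ofReal (hstep n j)
  -- the weighted summands V j = g⁻¹ * X j
  have hVmeas : ∀ j, Measurable[mΩ] fun ω => (g ω)⁻¹ * X j ω := fun j =>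
    hgmeas.inv.mul (hXmeas j)
  have hVnn : ∀ j, ∀ᵐ ω ∂μ, (‖(g ω)⁻¹ * X j ω‖₊ : ℝ≥0∞)
      = ENNReal.ofReal ((g ω)⁻¹ * |X j ω|) := by
    intro j
    filter_upwards [hgpos] with ω hg
    rw [← enorm_eq_nnnorm, Real.enorm_eq_ofReal_abs, abs_mul, abs_of_nonneg (inv_nonneg.2 hg.le)]
  have hVlin : ∀ j, ∫⁻ ω, ‖(g ω)⁻¹ * X j ω‖₊ ∂μ
      ≤ ENNReal.ofReal (∫ ω, (g ω)⁻¹ * (C ω * P j ω) ∂μ) := by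
    intro j
    calc ∫⁻ ω, ‖(g ω)⁻¹ * X j ω‖₊ ∂μ
        = ∫⁻ ω, ENNReal.ofReal ((g ω)⁻¹ * |X j ω|) ∂μ := lintegral_congr_ae (hVnn j)
      _ ≤ _ := hUbd j
  have hVint : ∀ j, Integrable (fun ω => (g ω)⁻¹ * X j ω) μ := by
    intro j
    refine ⟨(hVmeas j).aestronglyMeasurable, ?_⟩
    exact lt_of_le_of_lt (hVlin j) ENNReal.ofReal_lt_top
  -- value of ∫ V j
  have hVval : ∀ j, ∫ ω, (g ω)⁻¹ * X j ω ∂μ = d * ∫ ω, (g ω)⁻¹ * P j ω ∂μ := by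
    intro j
    have hpull := condExp_mul_of_stronglyMeasurable_left (m := F) (μ := μ)
      (f := fun ω => (g ω)⁻¹) (g := X j) hgSMinv (hVint j) (hXint j)
    calc ∫ ω, (g ω)⁻¹ * X j ω ∂μ
        = ∫ ω, (μ[fun ω' => (g ω')⁻¹ * X j ω'|F]) ω ∂μ := (integral_condExp hF).symm
      _ = ∫ ω, (g ω)⁻¹ * (μ[X j|F]) ω ∂μ := integral_congr_ae (by
          filter_upwards [hpull] with ω h
          exact h)
      _ = ∫ ω, (g ω)⁻¹ * (d * P j ω) ∂μ := integral_congr_ae (by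
          filter_upwards [hconsist j] with ω h
          exact congrArg (fun t => (g ω)⁻¹ * t) h)
      _ = d * ∫ ω, (g ω)⁻¹ * P j ω ∂μ := by
          rw [← integral_const_mul]
          refine integral_congr_ae (Eventually.of_forall fun ω => ?_)
          ring
  -- sum over j of ∫ W j equals 1
  have hWnonneg : ∀ j, 0 ≤ ∫ ω, (g ω)⁻¹ * P j ω ∂μ := fun j =>
    integral_nonneg_of_ae ((hWfacts j).mono fun ω h => h.1)
  have hWsumEnn : ∑' j, ENNReal.ofReal (∫ ω, (g ω)⁻¹ * P j ω ∂μ) = 1 := by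
    have h1 : ∀ j, ENNReal.ofReal (∫ ω, (g ω)⁻¹ * P j ω ∂μ)
        = ∫⁻ ω, ENNReal.ofReal ((g ω)⁻¹ * P j ω) ∂μ := fun j =>
      ofReal_integral_eq_lintegral_ofReal (hWint j) ((hWfacts j).mono fun ω h => h.1)
    calc ∑' j, ENNReal.ofReal (∫ ω, (g ω)⁻¹ * P j ω ∂μ)
        = ∑' j, ∫⁻ ω, ENNReal.ofReal ((g ω)⁻¹ * P j ω) ∂μ := tsum_congr h1
      _ = ∫⁻ ω, ∑' j, ENNReal.ofReal ((g ω)⁻¹ * P j ω) ∂μ :=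
          (lintegral_tsum fun j => (ENNReal.measurable_ofReal.comp
            (hgmeas.inv.mul (hPmeas j))).aemeasurable).symm
      _ = ∫⁻ _, (1 : ℝ≥0∞) ∂μ := by
          refine lintegral_congr_ae ?_
          filter_upwards [hbase] with ω h
          obtain ⟨hg, hp0, _, hsumm, hteq, _⟩ := h
          rw [← ENNReal.ofReal_tsum_of_nonneg
            (fun j => mul_nonneg (inv_nonneg.2 hg.le) (hp0 j)) (hsumm.mul_left _)]
          rw [tsum_mul_left, hteq, inv_mul_cancel₀ hg.ne']
          simp
      _ = 1 := by simp
  have hWsummable : Summable fun j => ∫ ω, (g ω)⁻¹ * P j ω ∂μ := by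
    have h := ENNReal.summable_toReal
      (f := fun j => ENNReal.ofReal (∫ ω, (g ω)⁻¹ * P j ω ∂μ))
      (by rw [hWsumEnn]; exact ENNReal.one_ne_top)
    have heq : (fun j => (ENNReal.ofReal (∫ ω, (g ω)⁻¹ * P j ω ∂μ)).toReal)
        = fun j => ∫ ω, (g ω)⁻¹ * P j ω ∂μ :=
      funext fun j => ENNReal.toReal_ofReal (hWnonneg j)
    rwa [heq] at h
  have hWtsum : ∑' j, ∫ ω, (g ω)⁻¹ * P j ω ∂μ = 1 := by
    have h := ENNReal.tsum_toReal_eq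
      (f := fun j => ENNReal.ofReal (∫ ω, (g ω)⁻¹ * P j ω ∂μ))
      (fun j => ENNReal.ofReal_ne_top)
    rw [hWsumEnn] at h
    have heq : (fun j => (ENNReal.ofReal (∫ ω, (g ω)⁻¹ * P j ω ∂μ)).toReal)
        = fun j => ∫ ω, (g ω)⁻¹ * P j ω ∂μ :=
      funext fun j => ENNReal.toReal_ofReal (hWnonneg j)
    rw [heq] at h
    simpa using h.symm
  -- sum over j of ∫ B j equals ∫ C
  have hBsumEnn : ∑' j, ENNReal.ofReal (∫ ω, (g ω)⁻¹ * (C ω * P j ω) ∂μ)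
      = ENNReal.ofReal (∫ ω, C ω ∂μ) := by
    have h1 : ∀ j, ENNReal.ofReal (∫ ω, (g ω)⁻¹ * (C ω * P j ω) ∂μ)
        = ∫⁻ ω, ENNReal.ofReal ((g ω)⁻¹ * (C ω * P j ω)) ∂μ := fun j =>
      ofReal_integral_eq_lintegral_ofReal (hBint j) ((hBfacts j).mono fun ω h => h.1)
    calc ∑' j, ENNReal.ofReal (∫ ω, (g ω)⁻¹ * (C ω * P j ω) ∂μ)
        = ∑' j, ∫⁻ ω, ENNReal.ofReal ((g ω)⁻¹ * (C ω * P j ω)) ∂μ := tsum_congr h1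
      _ = ∫⁻ ω, ∑' j, ENNReal.ofReal ((g ω)⁻¹ * (C ω * P j ω)) ∂μ :=
          (lintegral_tsum fun j => (ENNReal.measurable_ofReal.comp_aemeasurable
            ((hgmeas.inv.aemeasurable).mul
              (hCint.1.aemeasurable.mul (hPmeas j).aemeasurable)))).symm
      _ = ∫⁻ ω, ENNReal.ofReal (C ω) ∂μ := by
          refine lintegral_congr_ae ?_
          filter_upwards [hbase] with ω h
          obtain ⟨hg, hp0, _, hsumm, hteq, hc⟩ := h
          have heq2 : (fun j => (g ω)⁻¹ * (C ω * P j ω))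
              = fun j => ((g ω)⁻¹ * C ω) * P j ω := funext fun j => by ring
          rw [← ENNReal.ofReal_tsum_of_nonneg
            (fun j => mul_nonneg (inv_nonneg.2 hg.le) (mul_nonneg hc (hp0 j)))
            (by rw [heq2]; exact hsumm.mul_left _)]
          congr 1
          rw [heq2, tsum_mul_left, hteq]
          field_simp
      _ = ENNReal.ofReal (∫ ω, C ω ∂μ) :=
          (ofReal_integral_eq_lintegral_ofReal hCint hC0).symm
  -- summability of the X-series pointwise
  have hXsummable : ∀ ω, Summable fun j => X j ω := by
    intro ω
    refine summable_of_ne_finset_zero (s := Finset.range (N ω)) fun j hj => ?_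
    have h : ¬ j < N ω := fun h => hj (Finset.mem_range.2 h)
    simp [hXdef, h]
  have hVsummable : ∀ ω, Summable fun j => (g ω)⁻¹ * X j ω := fun ω =>
    (hXsummable ω).mul_left _
  have hSrw : ∀ ω, (∑' j, (g ω)⁻¹ * X j ω) = (g ω)⁻¹ * ∑' j, X j ω := fun ω =>
    tsum_mul_left
  have hSmeas : Measurable[mΩ] fun ω => (g ω)⁻¹ * ∑' j, X j ω :=
    hgmeas.inv.mul (measurable_tsum_of_summable hXmeas hXsummable)
  -- key lintegral bound for the whole sum
  have hKey : ∫⁻ ω, ‖(g ω)⁻¹ * ∑' j, X j ω‖₊ ∂μ ≤ ENNReal.ofReal (∫ ω, C ω ∂μ) := by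
    calc ∫⁻ ω, ‖(g ω)⁻¹ * ∑' j, X j ω‖₊ ∂μ
        ≤ ∫⁻ ω, ∑' j, (‖(g ω)⁻¹ * X j ω‖₊ : ℝ≥0∞) ∂μ := by
          refine lintegral_mono fun ω => ?_
          rw [← hSrw ω]
          calc (‖∑' j, (g ω)⁻¹ * X j ω‖₊ : ℝ≥0∞)
              = ENNReal.ofReal |∑' j, (g ω)⁻¹ * X j ω| := Real.enorm_eq_ofReal_abs _
            _ ≤ ENNReal.ofReal (∑' j, |(g ω)⁻¹ * X j ω|) := ENNReal.ofReal_le_ofReal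
                (norm_tsum_le_tsum_norm (E := ℝ) (f := fun j => (g ω)⁻¹ * X j ω)
                  (hVsummable ω).abs)
            _ = ∑' j, ENNReal.ofReal |(g ω)⁻¹ * X j ω| :=
                ENNReal.ofReal_tsum_of_nonneg (fun j => abs_nonneg _) (hVsummable ω).abs
            _ = ∑' j, (‖(g ω)⁻¹ * X j ω‖₊ : ℝ≥0∞) := by
                refine tsum_congr fun j => ?_
                rw [← enorm_eq_nnnorm, Real.enorm_eq_ofReal_abs]
      _ = ∑' j, ∫⁻ ω, ‖(g ω)⁻¹ * X j ω‖₊ ∂μ :=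
          lintegral_tsum fun j => (hVmeas j).enorm.aemeasurable
      _ ≤ ∑' j, ENNReal.ofReal (∫ ω, (g ω)⁻¹ * (C ω * P j ω) ∂μ) :=
          ENNReal.tsum_le_tsum hVlin
      _ = ENNReal.ofReal (∫ ω, C ω ∂μ) := hBsumEnn
  have hSint : Integrable (fun ω => (g ω)⁻¹ * ∑' j, X j ω) μ :=
    ⟨hSmeas.aestronglyMeasurable, lt_of_le_of_lt hKey ENNReal.ofReal_lt_top⟩
  have hSval : ∫ ω, (g ω)⁻¹ * (∑' j, X j ω) ∂μ = d := by
    have h1 : ∫ ω, (g ω)⁻¹ * (∑' j, X j ω) ∂μ = ∫ ω, ∑' j, (g ω)⁻¹ * X j ω ∂μ :=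
      integral_congr_ae (Eventually.of_forall fun ω => (hSrw ω).symm)
    rw [h1, integral_tsum (fun j => (hVint j).1) (by
      refine ne_of_lt (lt_of_le_of_lt (ENNReal.tsum_le_tsum hVlin) ?_)
      rw [hBsumEnn]
      exact ENNReal.ofReal_lt_top)]
    calc ∑' j, ∫ ω, (g ω)⁻¹ * X j ω ∂μ
        = ∑' j, d * ∫ ω, (g ω)⁻¹ * P j ω ∂μ := tsum_congr hVval
      _ = d * ∑' j, ∫ ω, (g ω)⁻¹ * P j ω ∂μ := tsum_mul_left
      _ = d := by rw [hWtsum, mul_one]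
  have hSabs : ∫ ω, |(g ω)⁻¹ * ∑' j, X j ω| ∂μ ≤ ∫ ω, C ω ∂μ := by
    have h1 : ∫ ω, |(g ω)⁻¹ * ∑' j, X j ω| ∂μ
        = (∫⁻ ω, ‖(g ω)⁻¹ * ∑' j, X j ω‖₊ ∂μ).toReal := by
      rw [integral_eq_lintegral_of_nonneg_ae (Eventually.of_forall fun ω => abs_nonneg _)
        hSmeas.abs.aestronglyMeasurable]
      congr 1
      exact lintegral_congr fun ω => (Real.enorm_eq_ofReal_abs _).symm
    rw [h1]
    have h2 := ENNReal.toReal_mono ENNReal.ofReal_ne_top hKey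
    rwa [ENNReal.toReal_ofReal (integral_nonneg_of_ae hC0)] at h2
  exact ⟨hSint, hSval, hSabs⟩

/-- The partial-sum estimator of the dependent-randomisation scheme:
`Z_m = ∑_{i<m} (E[N i | F i])⁻¹ ∑_{j≥1} Δ i^{(j)} 1{j ≤ N i}`
(Lean indexing: level `i` corresponds to the paper's level `i+1`, `F i` to the
paper's `F_{i−1}`, and `j < N i ω` to the paper's `j ≤ N_i`). -/
noncomputable def Zdep {Ω : Type*} {mΩ : MeasurableSpace Ω} (μ : Measure Ω)
    (F : ℕ → MeasurableSpace Ω) (Δc : ℕ → ℕ → Ω → ℝ) (N : ℕ → Ω → ℕ) (m : ℕ) :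
    Ω → ℝ := fun ω =>
  ∑ i ∈ Finset.range m, ((μ[fun ω' => (N i ω' : ℝ)|F i]) ω)⁻¹
    * ∑' j : ℕ, if j < N i ω then Δc i j ω else 0

/-- Dependent randomisation / stopping-time unbiasedness (Theorem 7(i) of the paper):
under the conditional consistency and domination conditions, `E[Z_m] = E[Y_m]`; and if
moreover `∑ c_i < ∞` and `∑ N_i < ∞` a.s., then `Z = lim Z_m` exists a.s. and
`E[Z] = E[Y]`. -/
theorem dependent_randomisation_unbiased
    {Ω : Type*} {mΩ : MeasurableSpace Ω} (μ : Measure Ω) [IsProbabilityMeasure μ]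
    (Ytarget : Ω → ℝ) (EY : ℕ → ℝ) (Δc : ℕ → ℕ → Ω → ℝ) (N : ℕ → Ω → ℕ)
    (F : ℕ → MeasurableSpace Ω) (C : ℕ → Ω → ℝ)
    (hF : ∀ i, F i ≤ mΩ)
    (hYint : Integrable Ytarget μ)
    (hEY0 : EY 0 = 0)
    (hEYlim : Tendsto EY atTop (nhds (∫ ω, Ytarget ω ∂μ)))
    (hΔcmeas : ∀ i j, Measurable (Δc i j))
    (hNmeas : ∀ i, Measurable (N i))
    (hNint : ∀ i, Integrable (fun ω => (N i ω : ℝ)) μ)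
    (hΔcint : ∀ i j, Integrable (fun ω => if j < N i ω then Δc i j ω else 0) μ)
    (hNpos : ∀ i, ∀ᵐ ω ∂μ, 0 < (μ[fun ω' => (N i ω' : ℝ)|F i]) ω)
    (hconsist : ∀ i j,
      (μ[fun ω => if j < N i ω then Δc i j ω else 0|F i])
        =ᵐ[μ] fun ω => (EY (i + 1) - EY i)
          * (μ[fun ω' => if j < N i ω' then (1 : ℝ) else 0|F i]) ω)
    (hCint : ∀ i, Integrable (C i) μ)
    (hbound : ∀ i j, ∀ᵐ ω ∂μ,
      (μ[fun ω' => if j < N i ω' then |Δc i j ω'| else 0|F i]) ω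
        ≤ C i ω * (μ[fun ω' => if j < N i ω' then (1 : ℝ) else 0|F i]) ω) :
    (∀ m, ∫ ω, Zdep μ F Δc N m ω ∂μ = EY m) ∧
      (Summable (fun i => ∫ ω, C i ω ∂μ) →
        (∀ᵐ ω ∂μ, {i | N i ω ≠ 0}.Finite) →
        ∃ Z : Ω → ℝ,
          (∀ᵐ ω ∂μ, Tendsto (fun m => Zdep μ F Δc N m ω) atTop (nhds (Z ω))) ∧
          ∫ ω, Z ω ∂μ = ∫ ω, Ytarget ω ∂μ) := by
  classical
  set S : ℕ → Ω → ℝ := fun i ω => ((μ[fun ω' => (N i ω' : ℝ)|F i]) ω)⁻¹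
    * ∑' j : ℕ, if j < N i ω then Δc i j ω else 0 with hSdef
  have key := fun i => dep_level μ (F i) (hF i) (Δc i) (N i) (C i) (EY (i + 1) - EY i)
    (hΔcmeas i) (hNmeas i) (hNint i) (hΔcint i) (hNpos i) (hconsist i) (hCint i) (hbound i)
  have hSint : ∀ i, Integrable (S i) μ := fun i => (key i).1
  have hSval : ∀ i, ∫ ω, S i ω ∂μ = EY (i + 1) - EY i := fun i => (key i).2.1
  have hSabs : ∀ i, ∫ ω, |S i ω| ∂μ ≤ ∫ ω, C i ω ∂μ := fun i => (key i).2.2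
  have part1 : ∀ m, ∫ ω, Zdep μ F Δc N m ω ∂μ = EY m := by
    intro m
    calc ∫ ω, Zdep μ F Δc N m ω ∂μ
        = ∑ i ∈ Finset.range m, ∫ ω, S i ω ∂μ :=
          integral_finset_sum _ (fun i _ => hSint i)
      _ = ∑ i ∈ Finset.range m, (EY (i + 1) - EY i) :=
          Finset.sum_congr rfl fun i _ => hSval i
      _ = EY m - EY 0 := Finset.sum_range_sub EY m
      _ = EY m := by rw [hEY0, sub_zero]
  refine ⟨part1, fun hCsum hNfin => ?_⟩
  have hCnn : ∀ i, (0 : ℝ) ≤ ∫ ω, C i ω ∂μ := fun i =>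
    le_trans (integral_nonneg fun ω => abs_nonneg _) (hSabs i)
  have hlin : ∀ i, ∫⁻ ω, ‖S i ω‖₊ ∂μ ≤ ENNReal.ofReal (∫ ω, C i ω ∂μ) := by
    intro i
    have h1 : ∫⁻ ω, ‖S i ω‖₊ ∂μ = ENNReal.ofReal (∫ ω, |S i ω| ∂μ) := by
      rw [ofReal_integral_eq_lintegral_ofReal (hSint i).abs
        (Eventually.of_forall fun ω => abs_nonneg _)]
      exact lintegral_congr fun ω => Real.enorm_eq_ofReal_abs _
    rw [h1]
    exact ENNReal.ofReal_le_ofReal (hSabs i)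
  have hsumlin : ∑' i, ∫⁻ ω, ‖S i ω‖₊ ∂μ ≠ ⊤ := by
    refine ne_of_lt (lt_of_le_of_lt (ENNReal.tsum_le_tsum hlin) ?_)
    rw [← ENNReal.ofReal_tsum_of_nonneg hCnn hCsum]
    exact ENNReal.ofReal_lt_top
  refine ⟨fun ω => ∑' i, S i ω, ?_, ?_⟩
  · filter_upwards [hNfin] with ω hfin
    have hzero : ∀ i ∉ hfin.toFinset, S i ω = 0 := by
      intro i hi
      have hNi : N i ω = 0 := by
        by_contra h
        exact hi (hfin.mem_toFinset.2 h)
      have hz : ∀ j : ℕ, (if j < N i ω then Δc i j ω else 0) = 0 := fun j => by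
        rw [hNi]
        simp
      simp only [hSdef, hz, tsum_zero, mul_zero]
    have hsum : Summable fun i => S i ω := summable_of_ne_finset_zero hzero
    exact hsum.hasSum.tendsto_sum_nat
  · have h2 : ∫ ω, (∑' i, S i ω) ∂μ = ∑' i, ∫ ω, S i ω ∂μ :=
      integral_tsum (fun i => (hSint i).1) hsumlin
    rw [h2]
    have hsummable : Summable fun i => ∫ ω, S i ω ∂μ := by
      refine Summable.of_norm_bounded hCsum fun i => ?_
      exact le_trans (norm_integral_le_integral_norm _) (hSabs i)
    have htendA := hsummable.hasSum.tendsto_sum_nat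
    have htendB : Tendsto (fun m => ∑ i ∈ Finset.range m, ∫ ω, S i ω ∂μ) atTop
        (nhds (∫ ω, Ytarget ω ∂μ)) := by
      have heq : (fun m => ∑ i ∈ Finset.range m, ∫ ω, S i ω ∂μ) = EY := by
        funext m
        rw [Finset.sum_congr rfl fun i _ => hSval i, Finset.sum_range_sub EY m, hEY0, sub_zero]
      rw [heq]
      exact hEYlim
    exact tendsto_nhds_unique htendA htendB
end
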